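/- arXiv:1305.6287 — 6 statements merged into one kernel-verified Lean document; each statement's English description precedes it below -/
import Mathlib

section
/- For every positive integer n, the intersection graph of ideals of Z/nZ is weakly perfect: its chromatic number equals its clique number. -/
/-- The intersection graph of ideals of a ring: vertices are the proper
non-trivial ideals, two distinct ideals are adjacent iff their intersection
is non-zero. -/
def interGraph (R : Type*) [CommRing R] : SimpleGraph {I : Ideal R // I ≠ ⊥ ∧ I ≠ ⊤} where
  Adj I J := I ≠ J ∧ I.1 ⊓ J.1 ≠ ⊥
  symm := ⟨by rintro I J ⟨h1, h2⟩; exact ⟨h1.symm, by rwa [inf_comm]⟩⟩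
  loopless := ⟨by rintro I ⟨h, -⟩; exact h rfl⟩

/-- Degree of a vertex. -/
noncomputable def vdeg {V : Type*} (G : SimpleGraph V) (v : V) : ℕ :=
  Nat.card {w // G.Adj v w}

/-- Maximum degree. -/
noncomputable def maxDeg {V : Type*} (G : SimpleGraph V) : ℕ := ⨆ v, vdeg G v

/-- Edge chromatic number (chromatic index), as the chromatic number of the line graph. -/
noncomputable def edgeChrom {V : Type*} (G : SimpleGraph V) : ℕ∞ :=
  (SimpleGraph.lineGraph G).chromaticNumber

/-- The intersection graph of non-empty proper subsets of `Fin m`. -/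
def subsetGraph (m : ℕ) : SimpleGraph {S : Finset (Fin m) // S ≠ ∅ ∧ S ≠ Finset.univ} where
  Adj S T := S ≠ T ∧ (S.1 ∩ T.1).Nonempty
  symm := ⟨by rintro S T ⟨h1, h2⟩; exact ⟨h1.symm, by rwa [Finset.inter_comm]⟩⟩
  loopless := ⟨by rintro S ⟨h, -⟩; exact h rfl⟩

set_option maxHeartbeats 1000000 in
section

namespace Stmt3Aux

variable {n : ℕ}

lemma valCast (x : ZMod n) [NeZero n] : ((x.val : ℕ) : ZMod n) = x := by
  rw [ZMod.natCast_val, ZMod.cast_id]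

instance : IsPrincipalIdealRing (ZMod n) :=
  IsPrincipalIdealRing.of_surjective (Int.castRingHom (ZMod n)) ZMod.intCast_surjective

/-- membership in the span of a divisor -/
lemma mem_span_iff [NeZero n] {d : ℕ} (hd : d ∣ n) (x : ZMod n) :
    x ∈ Ideal.span {(d : ZMod n)} ↔ d ∣ x.val := by
  rw [Ideal.mem_span_singleton]
  constructor
  · rintro ⟨y, hy⟩
    have h1 : ((x.val : ℤ) : ZMod n) = ((d * y.val : ℤ) : ZMod n) := by
      push_cast
      rw [valCast, valCast, hy]
    rw [ZMod.intCast_eq_intCast_iff] at h1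
    obtain ⟨k, hk⟩ := h1.dvd
    have hdz : (d : ℤ) ∣ (x.val : ℤ) := by
      have hdn : (d : ℤ) ∣ (n : ℤ) := Int.natCast_dvd_natCast.mpr hd
      have hx : (x.val : ℤ) = d * y.val - n * k := by linarith
      rw [hx]
      exact dvd_sub (Dvd.intro _ rfl) (hdn.mul_right _)
    exact_mod_cast hdz
  · intro h
    obtain ⟨c, hc⟩ := h
    exact ⟨(c : ZMod n), by rw [← valCast x, hc]; push_cast; ring⟩

lemma span_eq_bot_iff [NeZero n] {d : ℕ} (hd : d ∣ n) :
    Ideal.span {(d : ZMod n)} = ⊥ ↔ d = n := by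
  rw [Ideal.span_singleton_eq_bot, ZMod.natCast_eq_zero_iff]
  exact ⟨fun h => Nat.dvd_antisymm hd h, fun h => h ▸ dvd_rfl⟩

lemma span_eq_top_iff [NeZero n] (hn : n ≠ 1) {d : ℕ} (hd : d ∣ n) :
    Ideal.span {(d : ZMod n)} = ⊤ ↔ d = 1 := by
  rw [Ideal.span_singleton_eq_top, ZMod.isUnit_iff_coprime]
  constructor
  · intro h
    have h1 : d ∣ 1 := by
      have := Nat.dvd_gcd dvd_rfl hd
      rwa [Nat.Coprime.gcd_eq_one h] at this
    exact Nat.dvd_one.mp h1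
  · rintro rfl; exact Nat.coprime_one_left n

lemma span_inj [NeZero n] {d e : ℕ} (hd : d ∣ n) (he : e ∣ n)
    (h : Ideal.span {(d : ZMod n)} = Ideal.span {(e : ZMod n)}) : d = e := by
  have hn0 : n ≠ 0 := NeZero.ne n
  have key : ∀ {a b : ℕ}, a ∣ n → b ∣ n →
      Ideal.span {(a : ZMod n)} ≤ Ideal.span {(b : ZMod n)} → b ∣ a := by
    intro a b ha hb hle
    rcases eq_or_ne a n with ha' | hlt
    · exact ha' ▸ hb
    · have haval : ((a : ZMod n)).val = a := ZMod.val_cast_of_lt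
        (lt_of_le_of_ne (Nat.le_of_dvd (Nat.pos_of_ne_zero hn0) ha) hlt)
      have hm : (a : ZMod n) ∈ Ideal.span {(b : ZMod n)} :=
        hle (Ideal.mem_span_singleton.mpr dvd_rfl)
      rw [mem_span_iff hb, haval] at hm
      exact hm
  exact Nat.dvd_antisymm (key he hd h.ge) (key hd he h.le)

lemma exists_span [NeZero n] (I : Ideal (ZMod n)) :
    ∃ d : ℕ, d ∣ n ∧ I = Ideal.span {(d : ZMod n)} := by
  obtain ⟨g, hg⟩ : ∃ g : ZMod n, I = Ideal.span {g} := by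
    obtain ⟨g, hg⟩ := (IsPrincipalIdealRing.principal I)
    exact ⟨g, hg⟩
  refine ⟨Nat.gcd g.val n, Nat.gcd_dvd_right _ _, ?_⟩
  rw [hg]
  apply le_antisymm
  · rw [Ideal.span_singleton_le_span_singleton]
    obtain ⟨c, hc⟩ := Nat.gcd_dvd_left g.val n
    refine ⟨(c : ZMod n), ?_⟩
    rw [show ((Nat.gcd g.val n : ℕ) : ZMod n) * (c : ZMod n)
        = ((Nat.gcd g.val n * c : ℕ) : ZMod n) by push_cast; ring, ← hc, valCast]
  · rw [Ideal.span_singleton_le_span_singleton]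
    have hb := Nat.gcd_eq_gcd_ab g.val n
    refine ⟨((Nat.gcdA g.val n : ℤ) : ZMod n), ?_⟩
    have hgv : ((g.val : ℤ) : ZMod n) = g := by push_cast; rw [valCast]
    calc ((Nat.gcd g.val n : ℕ) : ZMod n) = ((Nat.gcd g.val n : ℤ) : ZMod n) := by push_cast; rfl
      _ = (((g.val : ℤ) * Nat.gcdA g.val n + n * Nat.gcdB g.val n : ℤ) : ZMod n) := by
          rw [← hb]
      _ = g * ((Nat.gcdA g.val n : ℤ) : ZMod n) := by push_cast [hgv]; simp

lemma inf_span [NeZero n] {d e : ℕ} (hd : d ∣ n) (he : e ∣ n) :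
    Ideal.span {(d : ZMod n)} ⊓ Ideal.span {(e : ZMod n)}
      = Ideal.span {((Nat.lcm d e : ℕ) : ZMod n)} := by
  have hl : Nat.lcm d e ∣ n := Nat.lcm_dvd hd he
  ext x
  rw [Ideal.mem_inf, mem_span_iff hd, mem_span_iff he, mem_span_iff hl]
  exact (Nat.lcm_dvd_iff).symm


open Finset

variable (n : ℕ)

/-- deficiency set of a divisor -/
def Tset (d : ℕ) : Finset ℕ :=
  n.primeFactors.filter (fun p => d.factorization p < n.factorization p)

variable {n}

lemma Tset_subset (d : ℕ) : Tset n d ⊆ n.primeFactors := filter_subset _ _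

lemma mem_Tset {d p : ℕ} :
    p ∈ Tset n d ↔ p ∈ n.primeFactors ∧ d.factorization p < n.factorization p :=
  mem_filter

lemma fact_le_of_dvd {d : ℕ} (hn : n ≠ 0) (hd : d ∣ n) (p : ℕ) :
    d.factorization p ≤ n.factorization p := by
  have hd0 : d ≠ 0 := fun h0 => hn (by simpa [h0, zero_dvd_iff] using hd)
  exact (Nat.factorization_le_iff_dvd hd0 hn).mpr hd p

lemma Tset_eq_empty_iff {d : ℕ} (hn : n ≠ 0) (hd : d ∣ n) : Tset n d = ∅ ↔ d = n := by
  constructor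
  · intro h
    have hd0 : d ≠ 0 := fun h0 => hn (by simpa [h0, zero_dvd_iff] using hd)
    refine Nat.dvd_antisymm hd ((Nat.factorization_le_iff_dvd hn hd0).mp ?_)
    intro p
    rcases Nat.eq_zero_or_pos (n.factorization p) with h0 | hpos
    · simp [h0]
    · have hp : p ∈ n.primeFactors := by
        have h1 := Nat.factorization_eq_zero_iff n p
        rw [Nat.mem_primeFactors]
        have h2 : ¬ (¬ p.Prime ∨ ¬ p ∣ n ∨ n = 0) := fun hc => by
          rw [h1.mpr hc] at hpos; omega
        push_neg at h2
        exact ⟨h2.1, h2.2.1, h2.2.2⟩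
      by_contra hlt
      exact (eq_empty_iff_forall_notMem.mp h p)
        (mem_Tset.mpr ⟨hp, by omega⟩)
  · rintro rfl
    simp [Tset, eq_empty_iff_forall_notMem, mem_Tset]

lemma lcm_eq_iff {d e : ℕ} (hn : n ≠ 0) (hd : d ∣ n) (he : e ∣ n) :
    Nat.lcm d e = n ↔ Tset n d ∩ Tset n e = ∅ := by
  have hd0 : d ≠ 0 := fun h0 => hn (by simpa [h0, zero_dvd_iff] using hd)
  have he0 : e ≠ 0 := fun h0 => hn (by simpa [h0, zero_dvd_iff] using he)
  have hl : Nat.lcm d e ∣ n := Nat.lcm_dvd hd he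
  have hl0 : Nat.lcm d e ≠ 0 := Nat.lcm_ne_zero hd0 he0
  constructor
  · intro h
    rw [eq_empty_iff_forall_notMem]
    intro p hp
    rw [mem_inter, mem_Tset, mem_Tset] at hp
    have := Nat.factorization_lcm hd0 he0
    have hle : n.factorization p ≤ (Nat.lcm d e).factorization p := by rw [h]
    rw [this, Finsupp.sup_apply] at hle
    have := hp.1.2; have := hp.2.2
    simp only [le_sup_iff] at hle
    omega
  · intro h
    refine Nat.dvd_antisymm hl ((Nat.factorization_le_iff_dvd hn hl0).mp ?_)
    intro p
    rw [Nat.factorization_lcm hd0 he0, Finsupp.sup_apply]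
    rcases Nat.eq_zero_or_pos (n.factorization p) with h0 | hpos
    · simp [h0]
    · have hp : p ∈ n.primeFactors := by
        have h1 := Nat.factorization_eq_zero_iff n p
        rw [Nat.mem_primeFactors]
        have h2 : ¬ (¬ p.Prime ∨ ¬ p ∣ n ∨ n = 0) := fun hc => by
          rw [h1.mpr hc] at hpos; omega
        push_neg at h2
        exact ⟨h2.1, h2.2.1, h2.2.2⟩
      by_contra hcon
      have h1 : p ∈ Tset n d ∩ Tset n e := by
        rw [mem_inter, mem_Tset, mem_Tset]
        simp only [le_sup_iff, not_or, not_le] at hcon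
        exact ⟨⟨hp, hcon.1⟩, ⟨hp, hcon.2⟩⟩
      rw [h] at h1
      exact absurd h1 (notMem_empty p)

variable (n)

/-- the class of divisors with deficiency set exactly `T` (excluding 1) -/
def A (T : Finset ℕ) : Finset ℕ :=
  n.divisors.filter (fun d => Tset n d = T ∧ d ≠ 1)

def cc (T : Finset ℕ) : ℕ := (A n T).card

/-- the chosen maximal intersecting family -/
def FF (T : Finset ℕ) : Prop :=
  T = n.primeFactors ∨ cc n (n.primeFactors \ T) < cc n T ∨
    (cc n (n.primeFactors \ T) = cc n T ∧ n.minFac ∈ T)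

variable {n}

lemma mem_A {d : ℕ} {T : Finset ℕ} (hn : n ≠ 0) :
    d ∈ A n T ↔ d ∣ n ∧ Tset n d = T ∧ d ≠ 1 := by
  simp [A, Nat.mem_divisors, hn, and_assoc]

/-- the pushing map: keep exponents on S, zero on S'∖S, full elsewhere -/
def push (n : ℕ) (S S' : Finset ℕ) (d : ℕ) : ℕ :=
  ∏ p ∈ n.primeFactors, p ^ (if p ∈ S then d.factorization p else
    if p ∈ S' then 0 else n.factorization p)

lemma fact_prod_pow (g : ℕ → ℕ) (q : ℕ) :
    (∏ p ∈ n.primeFactors, p ^ g p).factorization q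
      = if q ∈ n.primeFactors then g q else 0 := by
  have hne : ∀ p ∈ n.primeFactors, p ^ g p ≠ 0 :=
    fun p hp => pow_ne_zero _ (Nat.pos_of_mem_primeFactors hp).ne'
  rw [Nat.factorization_prod hne]
  rw [Finsupp.finset_sum_apply]
  have : ∀ p ∈ n.primeFactors, (p ^ g p).factorization q
      = if p = q then g p else 0 := by
    intro p hp
    rw [Nat.Prime.factorization_pow (Nat.prime_of_mem_primeFactors hp)]
    simp [Finsupp.single_apply]
  rw [Finset.sum_congr rfl this, Finset.sum_ite_eq' n.primeFactors q g]


lemma fact_zero_of_not_mem {q : ℕ} (hq : q ∉ n.primeFactors) : n.factorization q = 0 := by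
  rcases Nat.eq_zero_or_pos (n.factorization q) with h0 | hpos
  · exact h0
  · exfalso
    apply hq
    have h1 := Nat.factorization_eq_zero_iff n q
    rw [Nat.mem_primeFactors]
    have h2 : ¬ (¬ q.Prime ∨ ¬ q ∣ n ∨ n = 0) := fun hc => by
      rw [h1.mpr hc] at hpos; omega
    push_neg at h2
    exact ⟨h2.1, h2.2.1, h2.2.2⟩

section PushLemmas

variable {S S' : Finset ℕ} (hn : n ≠ 0) (hS' : S' ⊆ n.primeFactors)
  (hne : S' ≠ n.primeFactors) (hSS' : S ⊆ S')

/-- exponent function of the push -/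
def pexp (n : ℕ) (S S' : Finset ℕ) (d p : ℕ) : ℕ :=
  if p ∈ S then d.factorization p else if p ∈ S' then 0 else n.factorization p

lemma push_fact (d q : ℕ) : (push n S S' d).factorization q
    = if q ∈ n.primeFactors then pexp n S S' d q else 0 :=
  fact_prod_pow (pexp n S S' d) q

include hn hS' hne hSS' in
lemma push_mem_A {d : ℕ} (hd : d ∈ A n S) : push n S S' d ∈ A n S' := by
  obtain ⟨hdn, hdT, hd1⟩ := (mem_A hn).mp hd
  have hfle : ∀ p, d.factorization p ≤ n.factorization p := fact_le_of_dvd hn hdn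
  have hp0 : push n S S' d ≠ 0 := by
    apply Finset.prod_ne_zero_iff.mpr
    intro p hp
    exact pow_ne_zero _ (Nat.pos_of_mem_primeFactors hp).ne'
  have hpos : ∀ p ∈ n.primeFactors, 1 ≤ n.factorization p := fun p hp =>
    Nat.Prime.factorization_pos_of_dvd (Nat.prime_of_mem_primeFactors hp) hn
      (Nat.dvd_of_mem_primeFactors hp)
  rw [mem_A hn]
  refine ⟨?_, ?_, ?_⟩
  · rw [← Nat.factorization_le_iff_dvd hp0 hn]
    intro q
    rw [push_fact]
    by_cases hq : q ∈ n.primeFactors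
    · simp only [hq, if_true]
      unfold pexp
      split_ifs with h1 h2
      · exact hfle q
      · exact Nat.zero_le _
      · exact le_rfl
    · simp [hq]
  · ext q
    rw [mem_Tset, push_fact]
    constructor
    · rintro ⟨hqP, hlt⟩
      simp only [hqP, if_true] at hlt
      unfold pexp at hlt
      by_contra hq'
      rw [if_neg (fun hqS => hq' (hSS' hqS)), if_neg hq'] at hlt
      omega
    · intro hqS'
      have hqP : q ∈ n.primeFactors := hS' hqS'
      refine ⟨hqP, ?_⟩
      simp only [hqP, if_true]
      unfold pexp
      by_cases hqS : q ∈ S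
      · rw [if_pos hqS]
        have : q ∈ Tset n d := hdT ▸ hqS
        exact (mem_Tset.mp this).2
      · rw [if_neg hqS, if_pos hqS']
        exact hpos q hqP
  · obtain ⟨q, hqP, hqS'⟩ : ∃ q, q ∈ n.primeFactors ∧ q ∉ S' := by
      by_contra hcon
      push_neg at hcon
      exact hne (Finset.Subset.antisymm hS' hcon)
    intro h1
    have := push_fact (n := n) (S := S) (S' := S') d q
    rw [h1] at this
    simp only [Nat.factorization_one, Finsupp.coe_zero, Pi.zero_apply] at this
    rw [if_pos hqP] at this
    unfold pexp at this
    rw [if_neg (fun hq => hqS' (hSS' hq)), if_neg hqS'] at this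
    have := hpos q hqP
    omega

include hn hS' hne hSS' in
lemma push_injOn {d d' : ℕ} (hd : d ∈ A n S) (hd' : d' ∈ A n S)
    (heq : push n S S' d = push n S S' d') : d = d' := by
  obtain ⟨hdn, hdT, hd1⟩ := (mem_A hn).mp hd
  obtain ⟨hd'n, hd'T, hd'1⟩ := (mem_A hn).mp hd'
  have hd0 : d ≠ 0 := fun h0 => hn (by simpa [h0, zero_dvd_iff] using hdn)
  have hd'0 : d' ≠ 0 := fun h0 => hn (by simpa [h0, zero_dvd_iff] using hd'n)
  apply Nat.eq_of_factorization_eq hd0 hd'0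
  intro q
  by_cases hqS : q ∈ S
  · have hqP : q ∈ n.primeFactors := hS' (hSS' hqS)
    have h12 : (if q ∈ n.primeFactors then pexp n S S' d q else 0)
        = (if q ∈ n.primeFactors then pexp n S S' d' q else 0) := by
      rw [← push_fact, ← push_fact, heq]
    rw [if_pos hqP, if_pos hqP] at h12
    unfold pexp at h12
    rw [if_pos hqS, if_pos hqS] at h12
    exact h12
  · by_cases hqP : q ∈ n.primeFactors
    · -- q ∈ P ∖ S : both have full exponent
      have key : ∀ e : ℕ, e ∣ n → Tset n e = S → e.factorization q = n.factorization q := by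
        intro e hen heT
        have hle := fact_le_of_dvd hn hen q
        have : q ∉ Tset n e := heT ▸ hqS
        rw [mem_Tset] at this
        push_neg at this
        have := this hqP
        omega
      rw [key d hdn hdT, key d' hd'n hd'T]
    · -- q ∉ P : both zero
      have h0 : n.factorization q = 0 := fact_zero_of_not_mem hqP
      have := fact_le_of_dvd hn hdn q
      have := fact_le_of_dvd hn hd'n q
      omega

end PushLemmas

lemma cc_mono {S S' : Finset ℕ} (hn : n ≠ 0) (hS' : S' ⊆ n.primeFactors)
    (hne : S' ≠ n.primeFactors) (hSS' : S ⊆ S') : cc n S ≤ cc n S' := by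
  apply Finset.card_le_card_of_injOn (push n S S')
  · intro d hd
    exact push_mem_A hn hS' hne hSS' hd
  · intro d hd d' hd' heq
    exact push_injOn hn hS' hne hSS' hd hd' heq

lemma sdiff_ne_prime (hT : T ⊆ n.primeFactors) (hTne : T ≠ ∅) :
    n.primeFactors \ T ≠ n.primeFactors := by
  intro h
  obtain ⟨t, ht⟩ := Finset.nonempty_iff_ne_empty.mpr hTne
  have h2 : t ∈ n.primeFactors \ T := by rw [h]; exact hT ht
  exact (Finset.mem_sdiff.mp h2).2 ht

lemma FF_compl {T : Finset ℕ} (hn : 2 ≤ n) (hT : T ⊆ n.primeFactors)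
    (h : ¬ FF n T) : cc n T ≤ cc n (n.primeFactors \ T) ∧ FF n (n.primeFactors \ T) := by
  unfold FF at h
  push_neg at h
  obtain ⟨hTP, hlt, htie⟩ := h
  have hsd : n.primeFactors \ (n.primeFactors \ T) = T := by
    rw [Finset.sdiff_sdiff_self_left]
    exact Finset.inter_eq_right.mpr hT
  refine ⟨hlt, ?_⟩
  rcases lt_or_eq_of_le hlt with hstrict | heq
  · refine Or.inr (Or.inl ?_)
    rw [hsd]
    exact hstrict
  · have hmf : n.minFac ∉ T := htie heq.symm
    have hmfP : n.minFac ∈ n.primeFactors := Nat.mem_primeFactors.mpr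
      ⟨Nat.minFac_prime (by omega), Nat.minFac_dvd n, by omega⟩
    refine Or.inr (Or.inr ⟨?_, Finset.mem_sdiff.mpr ⟨hmfP, hmf⟩⟩)
    rw [hsd]
    omega

lemma FF_intersecting {T T' : Finset ℕ} (hn : 2 ≤ n)
    (hT : T ⊆ n.primeFactors) (hT' : T' ⊆ n.primeFactors)
    (hTne : T ≠ ∅) (hT'ne : T' ≠ ∅) (hF : FF n T) (hF' : FF n T')
    (hdisj : T ∩ T' = ∅) : False := by
  have hn0 : n ≠ 0 := by omega
  rcases eq_or_ne T n.primeFactors with rfl | hTP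
  · obtain ⟨t, ht⟩ := Finset.nonempty_iff_ne_empty.mpr hT'ne
    exact (Finset.notMem_empty t) (hdisj ▸ Finset.mem_inter.mpr ⟨hT' ht, ht⟩)
  rcases eq_or_ne T' n.primeFactors with rfl | hT'P
  · obtain ⟨t, ht⟩ := Finset.nonempty_iff_ne_empty.mpr hTne
    exact (Finset.notMem_empty t) (hdisj ▸ Finset.mem_inter.mpr ⟨ht, hT ht⟩)
  have hsub1 : T' ⊆ n.primeFactors \ T := fun x hx => Finset.mem_sdiff.mpr
    ⟨hT' hx, fun hxT => (Finset.notMem_empty x) (hdisj ▸ Finset.mem_inter.mpr ⟨hxT, hx⟩)⟩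
  have hsub2 : T ⊆ n.primeFactors \ T' := fun x hx => Finset.mem_sdiff.mpr
    ⟨hT hx, fun hxT => (Finset.notMem_empty x) (hdisj ▸ Finset.mem_inter.mpr ⟨hx, hxT⟩)⟩
  have h1 : cc n T' ≤ cc n (n.primeFactors \ T) :=
    cc_mono hn0 (Finset.sdiff_subset) (sdiff_ne_prime hT hTne) hsub1
  have h2 : cc n T ≤ cc n (n.primeFactors \ T') :=
    cc_mono hn0 (Finset.sdiff_subset) (sdiff_ne_prime hT' hT'ne) hsub2
  rcases hF with rfl | hF | ⟨hFeq, hFmf⟩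
  · exact hTP rfl
  · rcases hF' with rfl | hF' | ⟨hF'eq, hF'mf⟩
    · exact hT'P rfl
    · omega
    · omega
  · rcases hF' with rfl | hF' | ⟨hF'eq, hF'mf⟩
    · exact hT'P rfl
    · omega
    · exact (Finset.notMem_empty n.minFac)
        (hdisj ▸ Finset.mem_inter.mpr ⟨hFmf, hF'mf⟩)


end Stmt3Aux

open Stmt3Aux in
theorem stmt3 (n : ℕ) (hn : 0 < n) :
    (interGraph (ZMod n)).chromaticNumber = ((interGraph (ZMod n)).cliqueNum : ℕ∞) := by
  classical
  rcases Nat.lt_or_ge n 2 with hn1 | hn2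
  · -- n = 1 : empty vertex type
    have hn1' : n = 1 := by omega
    subst hn1'
    set G := interGraph (ZMod 1) with hG
    haveI : IsEmpty {I : Ideal (ZMod 1) // I ≠ ⊥ ∧ I ≠ ⊤} :=
      ⟨fun v => v.2.1 (Subsingleton.elim _ _)⟩
    have hset : {m | ∃ s, G.IsNClique m s} = {0} := by
      ext m
      simp only [Set.mem_setOf_eq, Set.mem_singleton_iff]
      constructor
      · rintro ⟨s, hs⟩
        rw [← hs.card_eq, Finset.eq_empty_of_isEmpty s, Finset.card_empty]
      · rintro rfl
        exact ⟨∅, SimpleGraph.isNClique_empty.mpr rfl⟩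
    have hc : G.cliqueNum = 0 := by
      rw [SimpleGraph.cliqueNum, hset, csSup_singleton]
    rw [hc, G.chromaticNumber_eq_zero_of_isEmpty, Nat.cast_zero]
  · -- main case
    haveI : NeZero n := ⟨by omega⟩
    have hn0 : n ≠ 0 := by omega
    have hnne1 : n ≠ 1 := by omega
    haveI : Finite (Ideal (ZMod n)) :=
      Finite.of_injective (fun I : Ideal (ZMod n) => (I : Set (ZMod n)))
        SetLike.coe_injective
    haveI : Fintype {I : Ideal (ZMod n) // I ≠ ⊥ ∧ I ≠ ⊤} := Fintype.ofFinite _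
    set V := {I : Ideal (ZMod n) // I ≠ ⊥ ∧ I ≠ ⊤} with hV
    set G := interGraph (ZMod n) with hG
    -- the divisor of a vertex
    have hds : ∀ v : V, ∃ d : ℕ, d ∣ n ∧ v.1 = Ideal.span {(d : ZMod n)} :=
      fun v => exists_span v.1
    set dv : V → ℕ := fun v => (hds v).choose with hdv
    have hdvd : ∀ v, dv v ∣ n := fun v => (hds v).choose_spec.1
    have hspan : ∀ v, v.1 = Ideal.span {((dv v : ℕ) : ZMod n)} :=
      fun v => (hds v).choose_spec.2
    have hne1 : ∀ v, dv v ≠ 1 := fun v h =>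
      v.2.2 (by rw [hspan v]; exact (span_eq_top_iff hnne1 (hdvd v)).mpr h)
    have hnen : ∀ v, dv v ≠ n := fun v h =>
      v.2.1 (by rw [hspan v]; exact (span_eq_bot_iff (hdvd v)).mpr h)
    have hdinj : ∀ u v : V, dv u = dv v → u = v := by
      intro u v h
      apply Subtype.ext
      rw [hspan u, hspan v, h]
    -- deficiency sets
    set Tv : V → Finset ℕ := fun v => Tset n (dv v) with hTv
    have hTsub : ∀ v, Tv v ⊆ n.primeFactors := fun v => Tset_subset _
    have hTne : ∀ v, Tv v ≠ ∅ := fun v h => (hnen v) ((Tset_eq_empty_iff hn0 (hdvd v)).mp h)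
    -- adjacency in terms of divisors
    have hadj : ∀ u v : V, G.Adj u v ↔ u ≠ v ∧ Nat.lcm (dv u) (dv v) ≠ n := by
      intro u v
      have h0 : G.Adj u v ↔ u ≠ v ∧ u.1 ⊓ v.1 ≠ ⊥ := by
        rw [hG]
        exact Iff.rfl
      rw [h0]
      refine and_congr_right fun _ => ?_
      rw [hspan u, hspan v, inf_span (hdvd u) (hdvd v)]
      exact not_congr (span_eq_bot_iff (Nat.lcm_dvd (hdvd u) (hdvd v)))
    have hadj' : ∀ u v : V, G.Adj u v ↔ u ≠ v ∧ Tv u ∩ Tv v ≠ ∅ := by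
      intro u v
      rw [hadj u v]
      exact and_congr_right fun _ =>
        not_congr (lcm_eq_iff hn0 (hdvd u) (hdvd v))
    -- membership of divisors in A classes
    have hdA : ∀ v : V, dv v ∈ A n (Tv v) := fun v =>
      (mem_A hn0).mpr ⟨hdvd v, rfl, hne1 v⟩
    -- vertex from a divisor in a class A n S with S ≠ ∅
    have hvx : ∀ (S : Finset ℕ), S ≠ ∅ → ∀ (e : ℕ), e ∈ A n S →
        ∃ w : V, dv w = e := by
      intro S hS e he
      obtain ⟨hen, heT, he1⟩ := (mem_A hn0).mp he
      have hene : e ≠ n := fun h => hS (heT ▸ (Tset_eq_empty_iff hn0 hen).mpr h)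
      refine ⟨⟨Ideal.span {(e : ZMod n)}, ?_, ?_⟩, ?_⟩
      · rw [Ne, span_eq_bot_iff hen]; exact hene
      · rw [Ne, span_eq_top_iff hnne1 hen]; exact he1
      · apply span_inj (hdvd _) hen
        exact (hspan _).symm
    -- chosen injections between classes
    have hE : ∀ T : Finset ℕ, ∃ f : ℕ → ℕ,
        cc n T ≤ cc n (n.primeFactors \ T) →
          (∀ d ∈ A n T, f d ∈ A n (n.primeFactors \ T)) ∧
          (∀ d ∈ A n T, ∀ d' ∈ A n T, f d = f d' → d = d') := by
      intro T
      by_cases h : cc n T ≤ cc n (n.primeFactors \ T)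
      · have hcard : Fintype.card ↥(A n T) ≤ Fintype.card ↥(A n (n.primeFactors \ T)) := by
          rw [Fintype.card_coe, Fintype.card_coe]
          exact h
        obtain ⟨emb⟩ := Function.Embedding.nonempty_of_card_le hcard
        refine ⟨fun d => if hd : d ∈ A n T then (emb ⟨d, hd⟩ : ℕ) else 0, fun _ => ⟨?_, ?_⟩⟩
        · intro d hd
          simp only [dif_pos hd]
          exact (emb ⟨d, hd⟩).2
        · intro d hd d' hd' hf
          simp only [dif_pos hd, dif_pos hd'] at hf
          have := emb.injective (Subtype.ext hf)
          exact congrArg Subtype.val this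
      · exact ⟨id, fun hc => absurd hc h⟩
    set fE : Finset ℕ → ℕ → ℕ := fun T => (hE T).choose with hfE
    have hfE1 : ∀ T, cc n T ≤ cc n (n.primeFactors \ T) →
        (∀ d ∈ A n T, fE T d ∈ A n (n.primeFactors \ T)) := fun T h => ((hE T).choose_spec h).1
    have hfE2 : ∀ T, cc n T ≤ cc n (n.primeFactors \ T) →
        (∀ d ∈ A n T, ∀ d' ∈ A n T, fE T d = fE T d' → d = d') :=
      fun T h => ((hE T).choose_spec h).2
    -- the coloring function
    have hcol : ∀ v : V, ∃ w : V, (FF n (Tv v) → w = v) ∧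
        (¬ FF n (Tv v) → dv w = fE (Tv v) (dv v)) := by
      intro v
      by_cases h : FF n (Tv v)
      · exact ⟨v, fun _ => rfl, fun hc => absurd h hc⟩
      · obtain ⟨hle, hFc⟩ := FF_compl hn2 (hTsub v) h
        have himg : fE (Tv v) (dv v) ∈ A n (n.primeFactors \ Tv v) :=
          hfE1 _ hle _ (hdA v)
        have hSne : n.primeFactors \ Tv v ≠ ∅ := fun hc =>
          h (Or.inl (Finset.Subset.antisymm (hTsub v)
            (Finset.sdiff_eq_empty_iff_subset.mp hc)))
        obtain ⟨w, hw⟩ := hvx _ hSne _ himg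
        exact ⟨w, fun hc => absurd hc h, fun _ => hw⟩
    set col : V → V := fun v => (hcol v).choose with hcoldef
    have hcolF : ∀ v, FF n (Tv v) → col v = v := fun v => (hcol v).choose_spec.1
    have hcolN : ∀ v, ¬ FF n (Tv v) → dv (col v) = fE (Tv v) (dv v) :=
      fun v => (hcol v).choose_spec.2
    -- complement helper
    have hTcompl : ∀ v : V, ¬ FF n (Tv v) → Tv (col v) = n.primeFactors \ Tv v := by
      intro v h
      obtain ⟨hle, hFc⟩ := FF_compl hn2 (hTsub v) h
      have himg : dv (col v) ∈ A n (n.primeFactors \ Tv v) := by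
        rw [hcolN v h]
        exact hfE1 _ hle _ (hdA v)
      exact ((mem_A hn0).mp himg).2.1
    -- every color is in the clique family
    have hcolK : ∀ v : V, FF n (Tv (col v)) := by
      intro v
      by_cases h : FF n (Tv v)
      · rw [hcolF v h]; exact h
      · rw [hTcompl v h]
        exact (FF_compl hn2 (hTsub v) h).2
    -- injectivity-style property of the coloring
    have hkey : ∀ u v : V, col u = col v → u = v ∨ Tv u ∩ Tv v = ∅ := by
      intro u v h
      by_cases hu : FF n (Tv u) <;> by_cases hv : FF n (Tv v)
      · left
        rw [← hcolF u hu, ← hcolF v hv, h]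
      · right
        have h1 : Tv u = Tv (col v) := by rw [← h, hcolF u hu]
        rw [h1, hTcompl v hv]
        exact Finset.sdiff_inter_self _ _
      · right
        have h1 : Tv v = Tv (col u) := by rw [h, hcolF v hv]
        rw [h1, hTcompl u hu, Finset.inter_comm]
        exact Finset.sdiff_inter_self _ _
      · left
        -- both pushed: same complement class
        have hTuv : Tv u = Tv v := by
          have h1 : n.primeFactors \ Tv u = n.primeFactors \ Tv v := by
            rw [← hTcompl u hu, ← hTcompl v hv, h]
          have h2 : n.primeFactors \ (n.primeFactors \ Tv u) = Tv u := by
            rw [Finset.sdiff_sdiff_self_left]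
            exact Finset.inter_eq_right.mpr (hTsub u)
          have h3 : n.primeFactors \ (n.primeFactors \ Tv v) = Tv v := by
            rw [Finset.sdiff_sdiff_self_left]
            exact Finset.inter_eq_right.mpr (hTsub v)
          rw [← h2, ← h3, h1]
        have hle := (FF_compl hn2 (hTsub u) hu).1
        have heq : fE (Tv u) (dv u) = fE (Tv u) (dv v) := by
          rw [← hcolN u hu, h, hcolN v hv, hTuv]
        have hdveq : dv u = dv v :=
          hfE2 _ hle _ (hdA u) _ (hTuv ▸ hdA v) heq
        exact hdinj u v hdveq
    -- the clique
    set K : Finset V := Finset.univ.filter (fun v => FF n (Tv v)) with hK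
    have hmemK : ∀ v : V, v ∈ K ↔ FF n (Tv v) := by
      intro v
      rw [hK, Finset.mem_filter]
      simp
    have hKclique : G.IsClique (K : Set V) := by
      intro u hu v hv huv
      rw [hadj' u v]
      refine ⟨huv, fun hdisj => ?_⟩
      exact FF_intersecting hn2 (hTsub u) (hTsub v) (hTne u) (hTne v)
        ((hmemK u).mp hu) ((hmemK v).mp hv) hdisj
    -- the coloring
    let C : G.Coloring ↥K := SimpleGraph.Coloring.mk
      (fun v => ⟨col v, (hmemK (col v)).mpr (hcolK v)⟩)
      (by
        intro a b hab hcon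
        have h1 : col a = col b := congrArg Subtype.val hcon
        rcases hkey a b h1 with h2 | h2
        · rw [hadj' a b] at hab
          exact hab.1 h2
        · rw [hadj' a b] at hab
          exact hab.2 h2)
    -- assembling the bounds
    have hchrom_le : G.chromaticNumber ≤ (K.card : ℕ∞) := by
      have h1 := C.colorable.chromaticNumber_le
      rwa [Fintype.card_coe] at h1
    have hK_le : K.card ≤ G.cliqueNum :=
      SimpleGraph.IsClique.card_le_cliqueNum (tc := hKclique)
    have hup : (G.cliqueNum : ℕ∞) ≤ G.chromaticNumber := by
      obtain ⟨s, hs⟩ := G.exists_isNClique_cliqueNum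
      have h1 := hs.isClique.card_le_chromaticNumber
      rwa [hs.card_eq] at h1
    exact le_antisymm (hchrom_le.trans (by exact_mod_cast hK_le)) hup

end
end

section
/- Let n be squarefree with exactly m ≥ 2 distinct prime factors. Then the clique number and chromatic number of the intersection graph of ideals of Z/nZ both equal 2^{m-1} − 1. -/
set_option linter.unusedSectionVars false
set_option maxHeartbeats 1000000
open Finset


section PiFields

variable {ι : Type*} [Fintype ι] [DecidableEq ι] {F : ι → Type*} [∀ i, Field (F i)]

/-- The ideal of a product of fields given by a subset of the index set. -/
def idealOfSet (F : ι → Type*) [∀ i, Field (F i)] (S : Finset ι) : Ideal (∀ i, F i) where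
  carrier := {x | ∀ i ∉ S, x i = 0}
  add_mem' := by intro a b ha hb i hi; simp [ha i hi, hb i hi]
  zero_mem' := by intro i hi; rfl
  smul_mem' := by intro c x hx i hi; simp [smul_eq_mul, hx i hi]

lemma mem_idealOfSet {S : Finset ι} {x : ∀ i, F i} :
    x ∈ idealOfSet F S ↔ ∀ i ∉ S, x i = 0 := Iff.rfl

lemma single_mem_idealOfSet {S : Finset ι} {i : ι} (h : i ∈ S) :
    Pi.single i (1 : F i) ∈ idealOfSet F S := by
  intro j hj
  exact Pi.single_eq_of_ne (by rintro rfl; exact hj h) 1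

lemma idealOfSet_le_iff {S T : Finset ι} : idealOfSet F S ≤ idealOfSet F T ↔ S ⊆ T := by
  constructor
  · intro h i hi
    by_contra hiT
    have := h (single_mem_idealOfSet hi) i hiT
    rw [Pi.single_eq_same] at this
    exact one_ne_zero this
  · intro h x hx i hi
    exact hx i fun hiS => hi (h hiS)

lemma idealOfSet_injective : Function.Injective (idealOfSet F) := by
  intro S T h
  exact subset_antisymm (idealOfSet_le_iff.mp h.le) (idealOfSet_le_iff.mp h.ge)

lemma idealOfSet_surjective : Function.Surjective (idealOfSet F) := by
  classical
  intro I
  refine ⟨univ.filter fun i => ∃ x ∈ I, x i ≠ 0, ?_⟩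
  apply le_antisymm
  · -- idealOfSet S ≤ I
    intro x hx
    have hsingle : ∀ i ∈ univ.filter fun i => ∃ x ∈ I, x i ≠ 0,
        Pi.single i (1 : F i) ∈ I := by
      intro i hi
      rw [mem_filter] at hi
      obtain ⟨-, y, hy, hyi⟩ := hi
      have : Pi.single i ((y i)⁻¹ : F i) * y ∈ I := I.mul_mem_left _ hy
      convert this using 1
      funext j
      rcases eq_or_ne j i with rfl | hji
      · simp [inv_mul_cancel₀ hyi]
      · simp [Pi.single_eq_of_ne hji]
    have hxsum : x = ∑ i ∈ univ.filter (fun i => ∃ x ∈ I, x i ≠ 0),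
        x * Pi.single i (1 : F i) := by
      funext j
      rw [Finset.sum_apply]
      by_cases hj : j ∈ univ.filter fun i => ∃ x ∈ I, x i ≠ 0
      · rw [Finset.sum_eq_single j]
        · simp
        · intro b _ hbj
          have : Pi.single b (1 : F b) j = 0 := Pi.single_eq_of_ne (Ne.symm hbj) 1
          simp [Pi.mul_apply, this]
        · intro h; exact absurd hj h
      · rw [mem_idealOfSet] at hx
        rw [hx j hj, Finset.sum_eq_zero]
        intro b hb
        have hbj : j ≠ b := by rintro rfl; exact absurd hb hj
        have : Pi.single b (1 : F b) j = 0 := Pi.single_eq_of_ne hbj 1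
        simp [Pi.mul_apply, this]
    rw [hxsum]
    exact Ideal.sum_mem I fun i hi => I.mul_mem_left _ (hsingle i hi)
  · intro x hx i hi
    rw [mem_filter] at hi
    push_neg at hi
    exact hi (mem_univ i) x hx

lemma idealOfSet_empty : idealOfSet F (∅ : Finset ι) = ⊥ := by
  apply le_antisymm
  · intro x hx
    rw [mem_idealOfSet] at hx
    have : x = 0 := funext fun i => hx i (notMem_empty i)
    simp [this]
  · exact bot_le

lemma idealOfSet_univ : idealOfSet F (univ : Finset ι) = ⊤ := by
  apply le_antisymm (le_top)
  intro x _
  rw [mem_idealOfSet]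
  intro i hi
  exact absurd (mem_univ i) hi

lemma idealOfSet_inf (S T : Finset ι) :
    idealOfSet F S ⊓ idealOfSet F T = idealOfSet F (S ∩ T) := by
  apply le_antisymm
  · rintro x ⟨hS, hT⟩ i hi
    rw [mem_inter] at hi
    push_neg at hi
    by_cases h : i ∈ S
    · exact hT i (hi h)
    · exact hS i h
  · intro x hx
    exact ⟨fun i hi => hx i (fun h => hi (mem_inter.mp h).1),
           fun i hi => hx i (fun h => hi (mem_inter.mp h).2)⟩

end PiFields

section IdealCongr

variable {R S : Type*} [CommRing R] [CommRing S]

/-- Ideals correspond along a ring equivalence. -/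
def idealCongr (e : R ≃+* S) : Ideal R ≃ Ideal S where
  toFun I := Ideal.comap (e.symm : S →+* R) I
  invFun J := Ideal.comap (e : R →+* S) J
  left_inv I := by ext x; simp [Ideal.mem_comap]
  right_inv J := by
    ext x
    simp only [Ideal.mem_comap, RingHom.coe_coe, RingEquiv.apply_symm_apply]

lemma idealCongr_inf (e : R ≃+* S) (I J : Ideal R) :
    idealCongr e (I ⊓ J) = idealCongr e I ⊓ idealCongr e J :=
  Ideal.comap_inf ..

lemma idealCongr_eq_bot_iff (e : R ≃+* S) (I : Ideal R) :
    idealCongr e I = ⊥ ↔ I = ⊥ := by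
  constructor
  · intro h
    rw [eq_bot_iff]
    intro x hx
    have : e x ∈ idealCongr e I := by
      show e.symm (e x) ∈ I
      simpa using hx
    rw [h, Ideal.mem_bot] at this
    have : x = 0 := by
      have := congrArg e.symm this
      simpa using this
    simp [this]
  · rintro rfl
    rw [eq_bot_iff]
    intro x hx
    have : e.symm x ∈ (⊥ : Ideal R) := hx
    rw [Ideal.mem_bot] at this
    have : x = 0 := by
      have := congrArg e this
      simpa using this
    simp [this]

lemma idealCongr_eq_top_iff (e : R ≃+* S) (I : Ideal R) :
    idealCongr e I = ⊤ ↔ I = ⊤ := by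
  constructor
  · intro h
    rw [eq_top_iff]
    intro x _
    have : e x ∈ idealCongr e I := h ▸ Submodule.mem_top
    have h2 : e.symm (e x) ∈ I := this
    simpa using h2
  · rintro rfl
    exact Ideal.comap_top
end IdealCongr

section GraphTransfer

variable {V W : Type*} {G : SimpleGraph V} {H : SimpleGraph W}

lemma iso_isNClique (f : G ≃g H) {k : ℕ} {s : Finset V} (h : G.IsNClique k s) :
    H.IsNClique k (s.map f.toEquiv.toEmbedding) := by
  constructor
  · rintro a ha b hb hab
    rw [Finset.coe_map, Set.mem_image] at ha hb
    obtain ⟨a', ha', rfl⟩ := ha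
    obtain ⟨b', hb', rfl⟩ := hb
    have hne : a' ≠ b' := by rintro rfl; exact hab rfl
    exact f.map_adj_iff.mpr (h.isClique ha' hb' hne)
  · rw [Finset.card_map]; exact h.card_eq

lemma iso_cliqueNum (f : G ≃g H) : G.cliqueNum = H.cliqueNum := by
  unfold SimpleGraph.cliqueNum
  congr 1
  ext k
  exact ⟨fun ⟨s, hs⟩ => ⟨_, iso_isNClique f hs⟩, fun ⟨s, hs⟩ => ⟨_, iso_isNClique f.symm hs⟩⟩

lemma iso_colorable (f : G ≃g H) (k : ℕ) : G.Colorable k ↔ H.Colorable k :=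
  ⟨fun ⟨C⟩ => ⟨C.comp f.symm.toHom⟩, fun ⟨C⟩ => ⟨C.comp f.toHom⟩⟩

lemma iso_chromaticNumber (f : G ≃g H) : G.chromaticNumber = H.chromaticNumber := by
  rw [SimpleGraph.chromaticNumber_eq_biInf, SimpleGraph.chromaticNumber_eq_biInf]
  have : Set.ofPred G.Colorable = Set.ofPred H.Colorable := Set.ext fun k => iso_colorable f k
  rw [this]

end GraphTransfer


section SubsetGraph

variable {m : ℕ} [NeZero m]

lemma card_zeroMem (m : ℕ) [NeZero m] :
    Fintype.card {S : Finset (Fin m) // 0 ∈ S} = 2 ^ (m - 1) := by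
  have e : {S : Finset (Fin m) // 0 ∈ S} ≃ {S : Finset (Fin m) // ¬ 0 ∈ S} :=
    { toFun := fun S => ⟨S.1.erase 0, notMem_erase 0 S.1⟩
      invFun := fun T => ⟨insert 0 T.1, mem_insert_self 0 T.1⟩
      left_inv := fun S => Subtype.ext (insert_erase S.2)
      right_inv := fun T => Subtype.ext (erase_insert T.2) }
  have h1 := Fintype.card_congr e
  have h2 := Fintype.card_subtype_compl (fun S : Finset (Fin m) => 0 ∈ S)
  have h3 : Fintype.card (Finset (Fin m)) = 2 ^ m := by
    rw [Fintype.card_finset, Fintype.card_fin]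
  have h4 : Fintype.card {S : Finset (Fin m) // 0 ∈ S} ≤ 2 ^ m := by
    rw [← h3]; exact Fintype.card_subtype_le _
  have h5 : 2 ^ m = 2 * 2 ^ (m - 1) := by
    conv_lhs => rw [show m = (m - 1) + 1 from (Nat.succ_pred_eq_of_pos (NeZero.pos m)).symm]
    rw [pow_succ']
  omega

lemma card_colors (m : ℕ) [NeZero m] :
    Fintype.card {S : Finset (Fin m) // 0 ∈ S ∧ S ≠ Finset.univ} = 2 ^ (m - 1) - 1 := by
  have e2 : {S : Finset (Fin m) // 0 ∈ S ∧ S ≠ Finset.univ} ≃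
      {x : {S : Finset (Fin m) // 0 ∈ S} // ¬ x = ⟨Finset.univ, mem_univ 0⟩} :=
    { toFun := fun v => ⟨⟨v.1, v.2.1⟩, fun h => v.2.2 (congrArg Subtype.val h)⟩
      invFun := fun x => ⟨x.1.1, x.1.2, fun h => x.2 (Subtype.ext h)⟩
      left_inv := fun v => rfl
      right_inv := fun x => rfl }
  rw [Fintype.card_congr e2, Fintype.card_subtype_compl, Fintype.card_subtype_eq,
    card_zeroMem]

/-- The representative of the pair {S, Sᶜ} containing 0. -/
def pairRep (v : {S : Finset (Fin m) // S ≠ ∅ ∧ S ≠ Finset.univ}) :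
    {S : Finset (Fin m) // 0 ∈ S ∧ S ≠ Finset.univ} :=
  if h : (0 : Fin m) ∈ v.1 then ⟨v.1, h, v.2.2⟩
  else ⟨v.1ᶜ, Finset.mem_compl.mpr h,
    fun hc => v.2.1 ((Finset.compl_eq_univ_iff v.1).mp hc)⟩

lemma pairRep_ne_of_adj {v w : {S : Finset (Fin m) // S ≠ ∅ ∧ S ≠ Finset.univ}}
    (hadj : (subsetGraph m).Adj v w) : pairRep v ≠ pairRep w := by
  obtain ⟨hne, x, hx⟩ := hadj
  rw [Finset.mem_inter] at hx
  intro heq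
  have heq' := congrArg Subtype.val heq
  unfold pairRep at heq'
  split_ifs at heq' with h1 h2 h2
  · exact hne (Subtype.ext heq')
  · rw [heq'] at hx
    exact (Finset.mem_compl.mp hx.1) hx.2
  · rw [← heq'] at hx
    exact (Finset.mem_compl.mp hx.2) hx.1
  · exact hne (Subtype.ext (compl_injective heq'))

lemma clique_bound {k : ℕ} {s : Finset {S : Finset (Fin m) // S ≠ ∅ ∧ S ≠ Finset.univ}}
    (hs : (subsetGraph m).IsNClique k s) : k ≤ 2 ^ (m - 1) - 1 := by
  have hinj : Set.InjOn pairRep (s : Set {S : Finset (Fin m) // S ≠ ∅ ∧ S ≠ Finset.univ}) := by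
    intro a ha b hb hab
    by_contra hne
    exact pairRep_ne_of_adj (hs.isClique ha hb hne) hab
  calc k = s.card := hs.card_eq.symm
    _ = (s.image pairRep).card := (Finset.card_image_of_injOn hinj).symm
    _ ≤ Fintype.card {S : Finset (Fin m) // 0 ∈ S ∧ S ≠ Finset.univ} := by
        rw [← Finset.card_univ]; exact Finset.card_le_univ _
    _ = 2 ^ (m - 1) - 1 := card_colors m

lemma exists_clique (m : ℕ) [NeZero m] :
    ∃ s, (subsetGraph m).IsNClique (2 ^ (m - 1) - 1) s := by
  refine ⟨Finset.univ.filter fun v => (0 : Fin m) ∈ v.1, ?_, ?_⟩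
  · intro a ha b hb hne
    rw [Finset.coe_filter, Set.mem_setOf_eq] at ha hb
    exact ⟨hne, ⟨0, Finset.mem_inter.mpr ⟨ha.2, hb.2⟩⟩⟩
  · rw [← Fintype.card_subtype]
    have e : {v : {S : Finset (Fin m) // S ≠ ∅ ∧ S ≠ Finset.univ} // (0 : Fin m) ∈ v.1} ≃
        {S : Finset (Fin m) // 0 ∈ S ∧ S ≠ Finset.univ} :=
      { toFun := fun v => ⟨v.1.1, v.2, v.1.2.2⟩
        invFun := fun S => ⟨⟨S.1, Finset.ne_empty_of_mem S.2.1, S.2.2⟩, S.2.1⟩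
        left_inv := fun v => rfl
        right_inv := fun S => rfl }
    rw [Fintype.card_congr e, card_colors]

lemma subsetGraph_cliqueNum (m : ℕ) [NeZero m] :
    (subsetGraph m).cliqueNum = 2 ^ (m - 1) - 1 := by
  apply le_antisymm
  · obtain ⟨s, hs⟩ := (subsetGraph m).exists_isNClique_cliqueNum
    exact clique_bound hs
  · obtain ⟨s, hs⟩ := exists_clique m
    have := SimpleGraph.IsClique.card_le_cliqueNum (G := subsetGraph m) (t := s)
      (tc := hs.isClique)
    rwa [hs.card_eq] at this

lemma subsetGraph_chromaticNumber (m : ℕ) [NeZero m] :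
    (subsetGraph m).chromaticNumber = ((2 ^ (m - 1) - 1 : ℕ) : ℕ∞) := by
  apply le_antisymm
  · have C : (subsetGraph m).Coloring {S : Finset (Fin m) // 0 ∈ S ∧ S ≠ Finset.univ} :=
      SimpleGraph.Coloring.mk pairRep fun hadj => pairRep_ne_of_adj hadj
    have := C.colorable.chromaticNumber_le
    rwa [card_colors] at this
  · by_contra h
    rw [not_le] at h
    have hfree := SimpleGraph.cliqueFree_of_chromaticNumber_lt h
    obtain ⟨s, hs⟩ := exists_clique m
    exact hfree s hs

end SubsetGraph

noncomputable def idealEquivSet (F : ι → Type*) [Fintype ι] [DecidableEq ι]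
    [∀ i, Field (F i)] : Finset ι ≃ Ideal (∀ i, F i) :=
  Equiv.ofBijective (idealOfSet F) ⟨idealOfSet_injective, idealOfSet_surjective⟩

theorem stmt5 (n m : ℕ) (hn : Squarefree n) (hm : n.primeFactors.card = m) (h2 : 2 ≤ m) :
    (interGraph (ZMod n)).cliqueNum = 2 ^ (m - 1) - 1 ∧
    (interGraph (ZMod n)).chromaticNumber = ((2 ^ (m - 1) - 1 : ℕ) : ℕ∞) := by
  haveI : NeZero m := ⟨by omega⟩
  have hcard : Fintype.card {q // q ∈ n.primeFactors} = m := by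
    rw [Fintype.card_coe]; exact hm
  set e0 := Fintype.equivFinOfCardEq hcard with he0
  set p : Fin m → ℕ := fun i => ((e0.symm i : {q // q ∈ n.primeFactors}) : ℕ) with hp_def
  have hp : ∀ i, (p i).Prime := fun i => Nat.prime_of_mem_primeFactors (e0.symm i).2
  have hcop : Pairwise (Function.onFun Nat.Coprime p) := by
    intro i j hij
    refine (Nat.coprime_primes (hp i) (hp j)).mpr ?_
    intro h
    exact hij (e0.symm.injective (Subtype.ext h))
  have hprod : (∏ i, p i) = n := by
    rw [← Nat.prod_primeFactors_of_squarefree hn,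
      ← Finset.prod_coe_sort n.primeFactors (fun q : ℕ => q)]
    exact Equiv.prod_comp e0.symm (fun q : {q // q ∈ n.primeFactors} => (q : ℕ))
  haveI : ∀ i, Fact (p i).Prime := fun i => ⟨hp i⟩
  let e : ZMod n ≃+* ∀ i, ZMod (p i) :=
    (ZMod.ringEquivCongr hprod.symm).trans (ZMod.prodEquivPi p hcop)
  let Φ : Ideal (ZMod n) ≃ Finset (Fin m) :=
    (idealCongr e).trans (idealEquivSet (fun i => ZMod (p i))).symm
  have hΦ : ∀ I, idealCongr e I = idealOfSet (fun i => ZMod (p i)) (Φ I) := by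
    intro I
    exact ((idealEquivSet (fun i => ZMod (p i))).apply_symm_apply (idealCongr e I)).symm
  have hbot : ∀ I : Ideal (ZMod n), Φ I = ∅ ↔ I = ⊥ := by
    intro I
    rw [← idealCongr_eq_bot_iff e I, hΦ I, ← idealOfSet_empty (F := fun i => ZMod (p i))]
    exact ⟨fun h => by rw [h], fun h => idealOfSet_injective h⟩
  have htop : ∀ I : Ideal (ZMod n), Φ I = Finset.univ ↔ I = ⊤ := by
    intro I
    rw [← idealCongr_eq_top_iff e I, hΦ I, ← idealOfSet_univ (F := fun i => ZMod (p i))]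
    exact ⟨fun h => by rw [h], fun h => idealOfSet_injective h⟩
  have hinf : ∀ I J : Ideal (ZMod n), Φ (I ⊓ J) = Φ I ∩ Φ J := by
    intro I J
    apply idealOfSet_injective (F := fun i => ZMod (p i))
    rw [← hΦ, idealCongr_inf, hΦ I, hΦ J, idealOfSet_inf]
  let vequiv : {I : Ideal (ZMod n) // I ≠ ⊥ ∧ I ≠ ⊤} ≃
      {S : Finset (Fin m) // S ≠ ∅ ∧ S ≠ Finset.univ} :=
    Φ.subtypeEquiv fun I => by
      simp only [ne_eq, hbot I, htop I]
  have hveq : ∀ a : {I : Ideal (ZMod n) // I ≠ ⊥ ∧ I ≠ ⊤}, (vequiv a).1 = Φ a.1 :=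
    fun a => rfl
  let giso : interGraph (ZMod n) ≃g subsetGraph m :=
    { toEquiv := vequiv
      map_rel_iff' := by
        intro a b
        show (vequiv a ≠ vequiv b ∧ ((vequiv a).1 ∩ (vequiv b).1).Nonempty) ↔
          (a ≠ b ∧ a.1 ⊓ b.1 ≠ ⊥)
        apply and_congr
        · exact not_congr vequiv.apply_eq_iff_eq
        · rw [hveq a, hveq b, ← hinf, Finset.nonempty_iff_ne_empty, ne_eq, hbot, ne_eq] }
  constructor
  · rw [iso_cliqueNum giso, subsetGraph_cliqueNum m]
  · rw [iso_chromaticNumber giso, subsetGraph_chromaticNumber m]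
end

section
/- Let R ≅ F_1 × ⋯ × F_m be a product of m ≥ 2 fields. Then the clique number and chromatic number of the intersection graph of ideals of R both equal 2^{m-1} − 1. -/
section IdealClassify

variable {m : ℕ} (F : Fin m → Type*) [∀ i, Field (F i)]

/-- The ideal of functions vanishing outside `S`. -/
def idl (S : Finset (Fin m)) : Ideal (∀ i, F i) where
  carrier := {f | ∀ i ∉ S, f i = 0}
  add_mem' := fun hf hg i hi => by simp [Pi.add_apply, hf i hi, hg i hi]
  zero_mem' := fun i _ => rfl
  smul_mem' := fun c f hf i hi => by simp [smul_eq_mul, Pi.mul_apply, hf i hi]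

variable {F}

lemma mem_idl {S : Finset (Fin m)} {f : ∀ i, F i} :
    f ∈ idl F S ↔ ∀ i ∉ S, f i = 0 := Iff.rfl

lemma single_mem_idl {S : Finset (Fin m)} {i : Fin m} (hi : i ∈ S) (a : F i) :
    Pi.single i a ∈ idl F S := by
  intro j hj
  have hne : j ≠ i := fun h => hj (by rwa [h])
  exact Pi.single_eq_of_ne hne a

lemma single_one_mem {I : Ideal (∀ i, F i)} {f : ∀ i, F i} (hf : f ∈ I) {i : Fin m}
    (hi : f i ≠ 0) : Pi.single i (1 : F i) ∈ I := by
  have h : Pi.single i (f i)⁻¹ * f = Pi.single i (1 : F i) := by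
    funext j
    rcases eq_or_ne j i with rfl | h
    · simp [Pi.mul_apply, inv_mul_cancel₀ hi]
    · simp [Pi.mul_apply, Pi.single_eq_of_ne h]
  rw [← h]
  exact I.mul_mem_left _ hf

open Classical in
/-- The support of an ideal. -/
noncomputable def isupp (I : Ideal (∀ i, F i)) : Finset (Fin m) :=
  Finset.univ.filter (fun i => ∃ f ∈ I, f i ≠ 0)

lemma mem_isupp {I : Ideal (∀ i, F i)} {i : Fin m} :
    i ∈ isupp I ↔ ∃ f ∈ I, f i ≠ 0 := by
  simp [isupp]

lemma idl_isupp (I : Ideal (∀ i, F i)) : idl F (isupp I) = I := by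
  ext f
  constructor
  · intro hf
    rw [← Finset.univ_sum_single f]
    refine Ideal.sum_mem _ (fun i _ => ?_)
    rcases eq_or_ne (f i) 0 with h | h
    · simp [h]
    · have hi : i ∈ isupp I := by
        by_contra hni; exact h (hf i hni)
      obtain ⟨g, hg, hgi⟩ := mem_isupp.mp hi
      have h1 : Pi.single i (1 : F i) ∈ I := single_one_mem hg hgi
      have heq : Pi.single i (f i) = Pi.single i (f i) * Pi.single i (1 : F i) := by
        funext j
        rcases eq_or_ne j i with rfl | hj
        · simp
        · simp [Pi.mul_apply, Pi.single_eq_of_ne hj]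
      rw [heq]
      exact I.mul_mem_left _ h1
  · intro hf i hi
    by_contra h
    exact hi (mem_isupp.mpr ⟨f, hf, h⟩)

lemma idl_eq_bot_iff {S : Finset (Fin m)} : idl F S = ⊥ ↔ S = ∅ := by
  constructor
  · intro h
    by_contra hS
    obtain ⟨i, hi⟩ := Finset.nonempty_iff_ne_empty.mpr hS
    have h1 : Pi.single i (1 : F i) ∈ idl F S := single_mem_idl hi 1
    rw [h, Ideal.mem_bot] at h1
    have := congrFun h1 i
    simp at this
  · rintro rfl
    ext f
    rw [mem_idl, Ideal.mem_bot]
    constructor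
    · intro h; funext i; exact h i (Finset.notMem_empty i)
    · rintro rfl i _; rfl

lemma idl_eq_top_iff {S : Finset (Fin m)} : idl F S = ⊤ ↔ S = Finset.univ := by
  constructor
  · intro h
    by_contra hS
    obtain ⟨i, hi⟩ : ∃ i, i ∉ S := by
      by_contra hc
      push_neg at hc
      exact hS (Finset.eq_univ_iff_forall.mpr hc)
    have h1 : (1 : ∀ i, F i) ∈ idl F S := h ▸ Submodule.mem_top
    exact one_ne_zero (h1 i hi)
  · rintro rfl
    ext f
    simp [mem_idl]

lemma idl_inj {S T : Finset (Fin m)} (h : idl F S = idl F T) : S = T := by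
  have key : ∀ {A B : Finset (Fin m)}, idl F A = idl F B → A ⊆ B := by
    intro A B hAB i hi
    by_contra hni
    have h1 : Pi.single i (1 : F i) ∈ idl F B := hAB ▸ single_mem_idl hi 1
    have := h1 i hni
    simp at this
  exact le_antisymm (key h) (key h.symm)

lemma idl_inf {S T : Finset (Fin m)} : idl F S ⊓ idl F T = idl F (S ∩ T) := by
  ext f
  simp only [Submodule.mem_inf, mem_idl]
  constructor
  · rintro ⟨h1, h2⟩ i hi
    rw [Finset.mem_inter, not_and_or] at hi
    rcases hi with hi | hi
    · exact h1 i hi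
    · exact h2 i hi
  · intro h
    constructor
    · intro i hi
      exact h i (fun hc => hi (Finset.mem_inter.mp hc).1)
    · intro i hi
      exact h i (fun hc => hi (Finset.mem_inter.mp hc).2)

lemma isupp_inj {I J : Ideal (∀ i, F i)} (h : isupp I = isupp J) : I = J := by
  rw [← idl_isupp I, ← idl_isupp J, h]

end IdealClassify

/-- counting lemma -/
lemma card_gamma {m : ℕ} (hm : 2 ≤ m) (z : Fin m) :
    Fintype.card {S : Finset (Fin m) // z ∈ S ∧ S ≠ Finset.univ} = 2 ^ (m - 1) - 1 := by
  classical
  rw [Fintype.card_subtype]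
  set A : Finset (Finset (Fin m)) := Finset.univ.filter (fun S => z ∈ S) with hA
  have hfe : (Finset.univ.filter (fun S : Finset (Fin m) => z ∈ S ∧ S ≠ Finset.univ))
      = A.erase Finset.univ := by
    ext S
    simp [hA, and_comm]
  have hcardA : A.card = 2 ^ (m - 1) := by
    have hAB : A.card = (Finset.univ.filter (fun S : Finset (Fin m) => z ∉ S)).card := by
      refine Finset.card_nbij' (fun S => S.erase z) (fun S => insert z S) ?_ ?_ ?_ ?_
      · intro S hS; simp
      · intro S hS
        simp [hA]
      · intro S hS
        have hS2 : z ∈ S := by simpa [hA] using hS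
        exact Finset.insert_erase hS2
      · intro S hS
        have hS2 : z ∉ S := by simpa using hS
        exact Finset.erase_insert hS2
    have hsum : A.card + (Finset.univ.filter (fun S : Finset (Fin m) => z ∉ S)).card
        = 2 ^ m := by
      rw [hA, Finset.card_filter_add_card_filter_not, Finset.card_univ,
        Fintype.card_finset, Fintype.card_fin]
    have hpow : 2 ^ m = 2 * 2 ^ (m - 1) := by
      rw [← pow_succ']
      congr 1
      omega
    omega
  rw [hfe, Finset.card_erase_of_mem (by simp [hA]), hcardA]

theorem stmt6 (m : ℕ) (hm : 2 ≤ m) (F : Fin m → Type*) [∀ i, Field (F i)] :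
    (interGraph (∀ i, F i)).cliqueNum = 2 ^ (m - 1) - 1 ∧
    (interGraph (∀ i, F i)).chromaticNumber = ((2 ^ (m - 1) - 1 : ℕ) : ℕ∞) := by
  classical
  set R := ∀ i, F i
  set z : Fin m := ⟨0, by omega⟩ with hz
  set γ := {S : Finset (Fin m) // z ∈ S ∧ S ≠ Finset.univ} with hγ
  set V := {I : Ideal R // I ≠ ⊥ ∧ I ≠ ⊤} with hV
  set N := 2 ^ (m - 1) - 1 with hN
  have hcardγ : Fintype.card γ = N := card_gamma hm z
  -- Fintype instance on vertices
  haveI : Fintype V := Fintype.ofInjective (fun v : V => isupp v.1)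
    (fun u v h => Subtype.ext (isupp_inj h))
  -- basic facts about vertices
  have hsupp_ne : ∀ v : V, isupp v.1 ≠ ∅ := by
    intro v hc
    exact v.2.1 (by rw [← idl_isupp v.1, hc, idl_eq_bot_iff])
  have hsupp_nu : ∀ v : V, isupp v.1 ≠ Finset.univ := by
    intro v hc
    exact v.2.2 (by rw [← idl_isupp v.1, hc, idl_eq_top_iff])
  -- adjacency in terms of supports
  have hadj : ∀ u v : V, (interGraph R).Adj u v ↔
      isupp u.1 ≠ isupp v.1 ∧ (isupp u.1 ∩ isupp v.1).Nonempty := by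
    intro u v
    show (u ≠ v ∧ u.1 ⊓ v.1 ≠ ⊥) ↔ _
    have h1 : u.1 ⊓ v.1 = idl F (isupp u.1 ∩ isupp v.1) := by
      conv_lhs => rw [← idl_isupp u.1, ← idl_isupp v.1]
      exact idl_inf
    constructor
    · rintro ⟨hne, hbot⟩
      refine ⟨fun h => hne (Subtype.ext (isupp_inj h)), ?_⟩
      rw [Finset.nonempty_iff_ne_empty]
      intro h
      exact hbot (by rw [h1, h, ← idl_eq_bot_iff.mpr rfl])
    · rintro ⟨hne, hnon⟩
      refine ⟨fun h => hne (h ▸ rfl), fun h => ?_⟩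
      rw [h1, idl_eq_bot_iff] at h
      rw [h] at hnon
      exact Finset.not_nonempty_empty hnon
  -- the clique: ideals `idl S` for `S ∈ γ`
  have hemb : Function.Injective (fun c : γ => (⟨idl F c.1,
      fun h => (Finset.nonempty_iff_ne_empty.mp ⟨z, c.2.1⟩) (idl_eq_bot_iff.mp h),
      fun h => c.2.2 (idl_eq_top_iff.mp h)⟩ : V)) := by
    intro c d h
    exact Subtype.ext (idl_inj (congrArg Subtype.val h))
  set K : Finset V := Finset.univ.map ⟨_, hemb⟩ with hK
  have hKcard : K.card = N := by
    rw [hK, Finset.card_map, Finset.card_univ, hcardγ]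
  have hKclique : (interGraph R).IsClique K := by
    intro u hu v hv huv
    simp only [hK, Finset.coe_map, Set.mem_image, Finset.mem_coe, Finset.mem_univ,
      Finset.coe_univ, Set.image_univ, Set.mem_range] at hu hv
    obtain ⟨c, rfl⟩ := hu
    obtain ⟨d, rfl⟩ := hv
    refine ⟨fun h => huv (h ▸ rfl), ?_⟩
    have h1 : (idl F c.1 : Ideal R) ⊓ idl F d.1 = idl F (c.1 ∩ d.1) := idl_inf
    intro h
    have h2 : idl F c.1 ⊓ idl F d.1 = ⊥ := h
    rw [h1, idl_eq_bot_iff] at h2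
    have hzm : z ∈ c.1 ∩ d.1 := Finset.mem_inter.mpr ⟨c.2.1, d.2.1⟩
    rw [h2] at hzm
    exact Finset.notMem_empty z hzm
  -- the coloring
  have hcompl_mem : ∀ v : V, z ∉ isupp v.1 → z ∈ (isupp v.1)ᶜ ∧ (isupp v.1)ᶜ ≠ Finset.univ := by
    intro v hv
    refine ⟨Finset.mem_compl.mpr hv, fun h => hsupp_ne v ?_⟩
    have := congrArg (·ᶜ) h
    simpa using this

  set col : V → γ := fun v =>
    if h : z ∈ isupp v.1 then ⟨isupp v.1, h, hsupp_nu v⟩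
    else ⟨(isupp v.1)ᶜ, (hcompl_mem v h).1, (hcompl_mem v h).2⟩ with hcol
  have hcol_proper : ∀ {u v : V}, (interGraph R).Adj u v → col u ≠ col v := by
    intro u v huv hc
    rw [hadj] at huv
    obtain ⟨hne, hnon⟩ := huv
    simp only [hcol] at hc
    by_cases h1 : z ∈ isupp u.1 <;> by_cases h2 : z ∈ isupp v.1 <;>
      simp only [h1, h2, dif_pos, dif_neg, not_false_iff] at hc
    · exact hne (congrArg Subtype.val hc)
    · -- isupp u = (isupp v)ᶜ
      have h3 : isupp u.1 = (isupp v.1)ᶜ := congrArg Subtype.val hc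
      obtain ⟨i, hi⟩ := hnon
      rw [Finset.mem_inter] at hi
      rw [h3, Finset.mem_compl] at hi
      exact hi.1 hi.2
    · have h3 : (isupp u.1)ᶜ = isupp v.1 := congrArg Subtype.val hc
      obtain ⟨i, hi⟩ := hnon
      rw [Finset.mem_inter] at hi
      rw [← h3, Finset.mem_compl] at hi
      exact hi.2 hi.1
    · have h3 : (isupp u.1)ᶜ = (isupp v.1)ᶜ := congrArg Subtype.val hc
      exact hne (compl_injective h3)
  have C : (interGraph R).Coloring γ := SimpleGraph.Coloring.mk col (fun h => hcol_proper h)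
  -- chromatic number ≤ N
  have hchrom_le : (interGraph R).chromaticNumber ≤ (N : ℕ∞) := by
    have := C.colorable
    rw [hcardγ] at this
    exact this.chromaticNumber_le
  -- N ≤ cliqueNum
  have hclique_le : N ≤ (interGraph R).cliqueNum := by
    rw [← hKcard]
    exact SimpleGraph.IsClique.card_le_cliqueNum (tc := hKclique)
  -- cliqueNum ≤ chromaticNumber
  have hcc : ((interGraph R).cliqueNum : ℕ∞) ≤ (interGraph R).chromaticNumber := by
    obtain ⟨s, hs⟩ := (interGraph R).exists_isNClique_cliqueNum
    rw [← hs.card_eq]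
    exact hs.isClique.card_le_chromaticNumber
  have h1 : (interGraph R).cliqueNum ≤ N := by
    have := hcc.trans hchrom_le
    exact_mod_cast this
  have hcn : (interGraph R).cliqueNum = N := le_antisymm h1 hclique_le
  refine ⟨hcn, le_antisymm hchrom_le ?_⟩
  calc (N : ℕ∞) = ((interGraph R).cliqueNum : ℕ∞) := by rw [hcn]
    _ ≤ _ := hcc
end

section
/- Let n = p_1^{n_1} ⋯ p_m^{n_m} with n_1 ≤ ⋯ ≤ n_m and suppose n_m ≥ ∏_{i=1}^{m-1} n_i. Then the clique number and chromatic number of G(Z/nZ) both equal n_m · ∏_{i=1}^{m-1}(n_i + 1) − 1. -/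
open Ideal in
lemma comap_span (n : ℕ) [NeZero n] (d : ℕ) (hd : d ∣ n) :
    Ideal.comap (Int.castRingHom (ZMod n)) (Ideal.span {(d : ZMod n)}) = Ideal.span {(d : ℤ)} := by
  have hs : Function.Surjective (Int.castRingHom (ZMod n)) := ZMod.intCast_surjective
  have h1 : (Ideal.span {(d : ZMod n)}) = Ideal.map (Int.castRingHom (ZMod n)) (Ideal.span {(d : ℤ)}) := by
    rw [Ideal.map_span, Set.image_singleton]
    norm_num
  rw [h1, Ideal.comap_map_of_surjective _ hs, ← RingHom.ker_eq_comap_bot, ZMod.ker_intCastRingHom]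
  rw [sup_eq_left, Ideal.span_singleton_le_span_singleton]
  exact_mod_cast hd

private lemma int_inf (a b : ℕ) : Ideal.span {(a : ℤ)} ⊓ Ideal.span {(b : ℤ)} = Ideal.span {(Nat.lcm a b : ℤ)} := by
  ext x
  simp only [Submodule.mem_inf, Ideal.mem_span_singleton]
  constructor
  · rintro ⟨h1, h2⟩
    have := Int.lcm_dvd (c := x.natAbs) (Int.dvd_natAbs.2 h1) (Int.dvd_natAbs.2 h2)
    simpa [Int.lcm, Int.natAbs_natCast, Int.dvd_natAbs] using Int.natCast_dvd.2 (by simpa [Int.lcm, Int.natAbs_natCast] using this)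
  · intro h
    constructor
    · exact dvd_trans (by exact_mod_cast Nat.dvd_lcm_left a b) h
    · exact dvd_trans (by exact_mod_cast Nat.dvd_lcm_right a b) h

private lemma span_surj (n : ℕ) [NeZero n] (I : Ideal (ZMod n)) :
    ∃ d : ℕ, d ∣ n ∧ I = Ideal.span {(d : ZMod n)} := by
  have hs : Function.Surjective (Int.castRingHom (ZMod n)) := ZMod.intCast_surjective
  obtain ⟨g, hg⟩ : ∃ g : ℤ, Ideal.comap (Int.castRingHom (ZMod n)) I = Ideal.span {g} :=
    ⟨_, (Ideal.span_singleton_generator _).symm⟩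
  refine ⟨g.natAbs, ?_, ?_⟩
  · have hker : (n : ℤ) ∈ Ideal.comap (Int.castRingHom (ZMod n)) I := by
      have : RingHom.ker (Int.castRingHom (ZMod n)) ≤ Ideal.comap (Int.castRingHom (ZMod n)) I :=
        Ideal.comap_mono bot_le
      exact this (by rw [ZMod.ker_intCastRingHom]; exact Ideal.mem_span_singleton_self _)
    rw [hg, Ideal.mem_span_singleton] at hker
    exact Int.natCast_dvd_natCast.1 ((Int.natAbs_dvd).2 hker)
  · have h2 : Ideal.comap (Int.castRingHom (ZMod n)) I = Ideal.span {(g.natAbs : ℤ)} := by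
      rw [hg]
      exact Ideal.span_singleton_eq_span_singleton.2 (Int.associated_natAbs g)
    calc I = Ideal.map (Int.castRingHom (ZMod n)) (Ideal.comap (Int.castRingHom (ZMod n)) I) :=
            (Ideal.map_comap_of_surjective _ hs I).symm
    _ = Ideal.span {(g.natAbs : ZMod n)} := by
          have hc : ((g.natAbs : ℕ) : ZMod n) = (Int.castRingHom (ZMod n)) ((g.natAbs : ℕ) : ℤ) := by
            rw [eq_intCast, Int.cast_natCast]
          rw [h2, Ideal.map_span, Set.image_singleton, ← hc]

private lemma span_bot (n : ℕ) [NeZero n] (d : ℕ) (hd : d ∣ n) :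
    Ideal.span {(d : ZMod n)} = ⊥ ↔ d = n := by
  rw [Ideal.span_singleton_eq_bot, ZMod.natCast_eq_zero_iff]
  exact ⟨fun h => Nat.dvd_antisymm hd h, fun h => h ▸ dvd_rfl⟩

private lemma span_top (n : ℕ) (hn : 1 < n) (d : ℕ) (hd : d ∣ n) :
    Ideal.span {(d : ZMod n)} = ⊤ ↔ d = 1 := by
  haveI : NeZero n := ⟨by omega⟩
  rw [Ideal.span_singleton_eq_top, ZMod.isUnit_iff_coprime]
  constructor
  · intro h
    have := Nat.dvd_gcd dvd_rfl hd
    rwa [Nat.Coprime.gcd_eq_one h, Nat.dvd_one] at this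
  · rintro rfl; exact Nat.coprime_one_left n

private lemma span_inj (n : ℕ) [NeZero n] (d e : ℕ) (hd : d ∣ n) (he : e ∣ n)
    (h : Ideal.span {(d : ZMod n)} = Ideal.span {(e : ZMod n)}) : d = e := by
  have := congrArg (Ideal.comap (Int.castRingHom (ZMod n))) h
  rw [comap_span n d hd, comap_span n e he, Ideal.span_singleton_eq_span_singleton] at this
  have h2 := Int.associated_iff.1 this
  omega

private lemma span_inf (n : ℕ) [NeZero n] (d e : ℕ) (hd : d ∣ n) (he : e ∣ n) :
    Ideal.span {(d : ZMod n)} ⊓ Ideal.span {(e : ZMod n)} = Ideal.span {(Nat.lcm d e : ZMod n)} := by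
  have hs : Function.Surjective (Int.castRingHom (ZMod n)) := ZMod.intCast_surjective
  apply Ideal.comap_injective_of_surjective _ hs
  rw [Ideal.comap_inf, comap_span n d hd, comap_span n e he,
    comap_span n _ (Nat.lcm_dvd hd he), int_inf]



lemma fact_prod_pow {T : Finset ℕ} (hT : ∀ q ∈ T, q.Prime) (a : ℕ → ℕ) (r : ℕ) :
    (∏ q ∈ T, q ^ a q).factorization r = if r ∈ T then a r else 0 := by
  rw [Nat.factorization_prod (fun q hq => pow_ne_zero _ (hT q hq).pos.ne'), Finset.sum_apply']
  rw [Finset.sum_congr rfl (fun q hq => by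
    rw [Nat.Prime.factorization_pow (hT q hq), Finsupp.single_apply])]
  exact Finset.sum_ite_eq' T r a

def Sd (n p d : ℕ) : Finset ℕ :=
  (n.primeFactors.erase p).filter (fun q => d.factorization q < n.factorization q)

def mval (n p d : ℕ) : ℕ := ∏ q ∈ Sd n p d, q ^ d.factorization q
def Mval (n p d : ℕ) : ℕ := ∏ q ∈ Sd n p d, q ^ (n.factorization q - 1)
def eval' (n p d : ℕ) : ℕ := ((Mval n p d).divisors.filter (· < mval n p d)).card
def cval (n p d : ℕ) : ℕ := p ^ (eval' n p d) * ∏ q ∈ Sd n p d, q ^ n.factorization q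
def col (n p d : ℕ) : ℕ := if d.factorization p < n.factorization p then d else cval n p d

def KC (n p : ℕ) : Finset ℕ := ((n / p).divisors).erase 1

def divGraph (n : ℕ) : SimpleGraph {d : ℕ // d ∣ n ∧ d ≠ 1 ∧ d ≠ n} where
  Adj d e := d ≠ e ∧ Nat.lcm d.1 e.1 ≠ n
  symm := ⟨by rintro d e ⟨h1, h2⟩; exact ⟨h1.symm, by rwa [Nat.lcm_comm]⟩⟩
  loopless := ⟨by rintro d ⟨h, -⟩; exact h rfl⟩

section Main

variable {n p : ℕ} (hn : 1 < n) (hp : p ∈ n.primeFactors)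

lemma Sd_primes (d : ℕ) : ∀ q ∈ Sd n p d, q.Prime := fun q hq =>
  Nat.prime_of_mem_primeFactors (Finset.mem_of_mem_erase (Finset.mem_of_mem_filter q hq))

lemma Sd_sub (d : ℕ) : Sd n p d ⊆ n.primeFactors.erase p := Finset.filter_subset _ _

lemma p_not_Sd (d : ℕ) : p ∉ Sd n p d := fun h =>
  (Finset.ne_of_mem_erase (Sd_sub d h)) rfl

lemma fact_mval (d r : ℕ) :
    (mval n p d).factorization r = if r ∈ Sd n p d then d.factorization r else 0 :=
  fact_prod_pow (Sd_primes d) _ r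

lemma fact_Mval (d r : ℕ) :
    (Mval n p d).factorization r = if r ∈ Sd n p d then n.factorization r - 1 else 0 :=
  fact_prod_pow (Sd_primes d) _ r

lemma mval_ne_zero (d : ℕ) : mval n p d ≠ 0 :=
  Finset.prod_ne_zero_iff.2 fun q hq => pow_ne_zero _ (Sd_primes d q hq).pos.ne'

lemma Mval_ne_zero (d : ℕ) : Mval n p d ≠ 0 :=
  Finset.prod_ne_zero_iff.2 fun q hq => pow_ne_zero _ (Sd_primes d q hq).pos.ne'

include hp in
lemma fact_cval (d r : ℕ) :
    (cval n p d).factorization r =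
      if r = p then eval' n p d else if r ∈ Sd n p d then n.factorization r else 0 := by
  have pp : p.Prime := Nat.prime_of_mem_primeFactors hp
  have h1 : (p ^ eval' n p d) ≠ 0 := pow_ne_zero _ pp.pos.ne'
  have h2 : (∏ q ∈ Sd n p d, q ^ n.factorization q) ≠ 0 :=
    Finset.prod_ne_zero_iff.2 fun q hq => pow_ne_zero _ (Sd_primes d q hq).pos.ne'
  rw [cval, Nat.factorization_mul h1 h2, Finsupp.add_apply, pp.factorization_pow,
    Finsupp.single_apply, fact_prod_pow (Sd_primes d)]
  rcases eq_or_ne r p with rfl | hr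
  · simp [p_not_Sd d]
  · simp [hr, Ne.symm hr]

include hn hp in
lemma dvd_ordc {d : ℕ} (hd : d ∣ n) : d ∣ n / p ↔ d.factorization p < n.factorization p := by
  have hn0 : n ≠ 0 := by omega
  have hd0 : d ≠ 0 := fun h => hn0 (zero_dvd_iff.1 (h ▸ hd))
  have pp : p.Prime := Nat.prime_of_mem_primeFactors hp
  have hpn : p ∣ n := Nat.dvd_of_mem_primeFactors hp
  have hnp0 : n / p ≠ 0 := Nat.div_ne_zero_iff.2 ⟨pp.pos.ne', Nat.le_of_dvd (by omega) hpn⟩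
  have hnp1 : 1 ≤ n.factorization p := (Nat.Prime.factorization_pos_of_dvd pp hn0 hpn)
  have hfd : d.factorization ≤ n.factorization := (Nat.factorization_le_iff_dvd hd0 hn0).2 hd
  rw [← Nat.factorization_le_iff_dvd hd0 hnp0, Nat.factorization_div hpn, pp.factorization]
  constructor
  · intro h
    have := h p
    rw [Finsupp.tsub_apply, Finsupp.single_apply, if_pos rfl] at this
    omega
  · intro h r
    rw [Finsupp.tsub_apply, Finsupp.single_apply]
    rcases eq_or_ne p r with rfl | hr
    · simpa using Nat.le_sub_one_of_lt h
    · simpa [hr] using hfd r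

include hn hp in
lemma card_divisors_ordc :
    (n / p).divisors.card =
      n.factorization p * ∏ q ∈ n.primeFactors.erase p, (n.factorization q + 1) := by
  have hn0 : n ≠ 0 := by omega
  have pp : p.Prime := Nat.prime_of_mem_primeFactors hp
  have hpn : p ∣ n := Nat.dvd_of_mem_primeFactors hp
  have hnp0 : n / p ≠ 0 := Nat.div_ne_zero_iff.2 ⟨pp.pos.ne', Nat.le_of_dvd (by omega) hpn⟩
  have hnp1 : 1 ≤ n.factorization p := (Nat.Prime.factorization_pos_of_dvd pp hn0 hpn)
  have hfd : (n / p).factorization = n.factorization - p.factorization :=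
    Nat.factorization_div hpn
  have hsub : (n / p).primeFactors ⊆ n.primeFactors :=
    Nat.primeFactors_mono (Nat.div_dvd_of_dvd hpn) hn0
  rw [Nat.card_divisors hnp0]
  rw [Finset.prod_subset hsub (fun q hq hq2 => by
    rw [← Nat.support_factorization] at hq2
    simp [Finsupp.notMem_support_iff.1 hq2])]

  rw [← Finset.mul_prod_erase _ _ hp]
  congr 1
  · rw [hfd, Finsupp.tsub_apply, pp.factorization, Finsupp.single_apply, if_pos rfl]
    omega
  · exact Finset.prod_congr rfl fun q hq => by
      rw [hfd, Finsupp.tsub_apply, pp.factorization, Finsupp.single_apply,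
        if_neg (Finset.ne_of_mem_erase hq).symm]
      simp

include hn in
lemma fact_le {d : ℕ} (hd : d ∣ n) : ∀ r, d.factorization r ≤ n.factorization r := by
  have hn0 : n ≠ 0 := by omega
  have hd0 : d ≠ 0 := fun h => hn0 (zero_dvd_iff.1 (h ▸ hd))
  exact fun r => (Nat.factorization_le_iff_dvd hd0 hn0).2 hd r

include hn hp in
lemma Sd_nonempty {d : ℕ} (hd : d ∣ n) (hdn : d ≠ n)
    (hfull : n.factorization p ≤ d.factorization p) : (Sd n p d).Nonempty := by
  have hn0 : n ≠ 0 := by omega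
  have hd0 : d ≠ 0 := fun h => hn0 (zero_dvd_iff.1 (h ▸ hd))
  rw [Finset.nonempty_iff_ne_empty]
  intro hemp
  apply hdn
  apply Nat.factorization_inj (Set.mem_setOf_eq ▸ hd0) (Set.mem_setOf_eq ▸ hn0)
  ext r
  rcases eq_or_ne r p with rfl | hr
  · exact le_antisymm (fact_le hn hd r) hfull
  rcases Finset.decidableMem r n.primeFactors with hmem | hmem
  · have : r ∉ n.primeFactors := hmem
    have h1 : n.factorization r = 0 := by
      rwa [← Nat.support_factorization, Finsupp.notMem_support_iff] at this
    have := fact_le hn hd r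
    omega
  · have : r ∉ Sd n p d := by rw [hemp]; exact Finset.notMem_empty r
    rw [Sd, Finset.mem_filter, Finset.mem_erase] at this
    push_neg at this
    have h2 := this ⟨hr, hmem⟩
    have := fact_le hn hd r
    omega

omit hn hp in
lemma mval_mem {d : ℕ} : mval n p d ∈ (Mval n p d).divisors := by
  rw [Nat.mem_divisors]
  refine ⟨Finset.prod_dvd_prod_of_dvd _ _ (fun q hq => pow_dvd_pow q ?_), Mval_ne_zero d⟩
  have := (Finset.mem_filter.1 hq).2
  omega

include hn hp in
lemma eval_lt
    (hbig : ∏ q ∈ n.primeFactors.erase p, n.factorization q ≤ n.factorization p)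
    (d : ℕ) : eval' n p d < n.factorization p := by
  have hn0 : n ≠ 0 := by omega
  have h1 : eval' n p d < (Mval n p d).divisors.card := by
    apply Finset.card_lt_card
    constructor
    · exact Finset.filter_subset _ _
    · intro hsub
      have := hsub (mval_mem (d := d))
      simp at this
  have h2 : (Mval n p d).divisors.card = ∏ q ∈ Sd n p d, n.factorization q := by
    rw [Nat.card_divisors (Mval_ne_zero d)]
    have hsub : (Mval n p d).primeFactors ⊆ Sd n p d := by
      intro q hq
      rw [← Nat.support_factorization, Finsupp.mem_support_iff] at hq
      by_contra hq2
      rw [fact_Mval, if_neg hq2] at hq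
      exact hq rfl
    rw [Finset.prod_subset hsub (fun q hq hq2 => by
      rw [← Nat.support_factorization] at hq2
      simp [Finsupp.notMem_support_iff.1 hq2])]
    refine Finset.prod_congr rfl fun q hq => ?_
    have hq1 : q ∈ n.primeFactors := Finset.mem_of_mem_erase (Sd_sub d hq)
    have hq3 : n.factorization q ≠ 0 := by
      rwa [← Nat.support_factorization, Finsupp.mem_support_iff] at hq1
    rw [fact_Mval, if_pos hq]
    omega
  have h3 : ∏ q ∈ Sd n p d, n.factorization q ≤
      ∏ q ∈ n.primeFactors.erase p, n.factorization q := by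
    apply Finset.prod_le_prod_of_subset_of_one_le' (Sd_sub d)
    intro q hq _
    have hq1 : q ∈ n.primeFactors := Finset.mem_of_mem_erase hq
    have hq3 : n.factorization q ≠ 0 := by
      rwa [← Nat.support_factorization, Finsupp.mem_support_iff] at hq1
    omega
  omega

include hn hp in
lemma cval_ne_zero (d : ℕ) : cval n p d ≠ 0 := by
  have pp : p.Prime := Nat.prime_of_mem_primeFactors hp
  exact mul_ne_zero (pow_ne_zero _ pp.pos.ne')
    (Finset.prod_ne_zero_iff.2 fun q hq => pow_ne_zero _ (Sd_primes d q hq).pos.ne')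

include hn hp in
lemma cval_dvd
    (hbig : ∏ q ∈ n.primeFactors.erase p, n.factorization q ≤ n.factorization p)
    (d : ℕ) : cval n p d ∣ n / p := by
  have hn0 : n ≠ 0 := by omega
  have pp : p.Prime := Nat.prime_of_mem_primeFactors hp
  have hpn : p ∣ n := Nat.dvd_of_mem_primeFactors hp
  have hnp0 : n / p ≠ 0 := Nat.div_ne_zero_iff.2 ⟨pp.pos.ne', Nat.le_of_dvd (by omega) hpn⟩
  have hnp1 : 1 ≤ n.factorization p := (Nat.Prime.factorization_pos_of_dvd pp hn0 hpn)
  rw [← Nat.factorization_le_iff_dvd (cval_ne_zero hn hp d) hnp0, Nat.factorization_div hpn,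
    pp.factorization]
  intro r
  rw [Finsupp.tsub_apply, Finsupp.single_apply, fact_cval hp]
  rcases eq_or_ne r p with rfl | hr
  · have := eval_lt hn hp hbig d
    simp only [if_true, eq_self_iff_true]
    omega
  · simp only [if_neg (Ne.symm hr), if_neg hr]
    split_ifs with hmem
    · omega
    · omega

include hn hp in
lemma cval_ne_one {d : ℕ} (hd : d ∣ n) (hdn : d ≠ n)
    (hfull : n.factorization p ≤ d.factorization p) : cval n p d ≠ 1 := by
  obtain ⟨q, hq⟩ := Sd_nonempty hn hp hd hdn hfull
  intro h1
  have := fact_cval hp (d := d) (r := q)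
  rw [h1] at this
  have hq1 : q ∈ n.primeFactors := Finset.mem_of_mem_erase (Sd_sub d hq)
  have hq3 : n.factorization q ≠ 0 := by
    rwa [← Nat.support_factorization, Finsupp.mem_support_iff] at hq1
  have hqp : q ≠ p := Finset.ne_of_mem_erase (Sd_sub d hq)
  rw [Nat.factorization_one, if_neg hqp, if_pos hq] at this
  simp at this
  omega

include hn hp in
lemma lcm_cval
    (hbig : ∏ q ∈ n.primeFactors.erase p, n.factorization q ≤ n.factorization p)
    {d : ℕ} (hd : d ∣ n) (hdn : d ≠ n)
    (hfull : n.factorization p ≤ d.factorization p) : Nat.lcm (cval n p d) d = n := by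
  have hn0 : n ≠ 0 := by omega
  have hd0 : d ≠ 0 := fun h => hn0 (zero_dvd_iff.1 (h ▸ hd))
  have pp : p.Prime := Nat.prime_of_mem_primeFactors hp
  have hpn : p ∣ n := Nat.dvd_of_mem_primeFactors hp
  have hcd : cval n p d ∣ n := (cval_dvd hn hp hbig d).trans (Nat.div_dvd_of_dvd hpn)
  apply Nat.dvd_antisymm (Nat.lcm_dvd hcd hd)
  have hl0 : Nat.lcm (cval n p d) d ≠ 0 := Nat.lcm_ne_zero (cval_ne_zero hn hp d) hd0
  rw [← Nat.factorization_le_iff_dvd hn0 hl0, Nat.factorization_lcm (cval_ne_zero hn hp d) hd0]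
  intro r
  rw [Finsupp.sup_apply, fact_cval hp]
  have hle := fact_le hn hd r
  rcases eq_or_ne r p with rfl | hr
  · simp only [if_pos rfl]
    omega
  · simp only [if_neg hr]
    by_cases hmem : r ∈ Sd n p d
    · rw [if_pos hmem]; omega
    · rw [if_neg hmem]
      by_cases hpf : r ∈ n.primeFactors
      · have : r ∈ n.primeFactors.erase p := Finset.mem_erase.2 ⟨hr, hpf⟩
        have h2 : ¬ d.factorization r < n.factorization r := by
          intro hlt
          exact hmem (Finset.mem_filter.2 ⟨this, hlt⟩)
        omega
      · have : n.factorization r = 0 := by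
          rwa [← Nat.support_factorization, Finsupp.notMem_support_iff] at hpf
        omega

omit hn hp in
lemma rank_mono {M a b : ℕ} (ha : a ∈ M.divisors) (hab : a < b) :
    ((M.divisors).filter (· < a)).card < ((M.divisors).filter (· < b)).card := by
  apply Finset.card_lt_card
  constructor
  · intro x hx
    rw [Finset.mem_filter] at hx ⊢
    exact ⟨hx.1, lt_trans hx.2 hab⟩
  · intro hsub
    have := hsub (Finset.mem_filter.2 ⟨ha, hab⟩)
    simp at this

include hn hp in
lemma Sd_mem_iff {d q : ℕ} (hd : d ∣ n) :
    q ∈ Sd n p d ↔ q ≠ p ∧ 0 < (cval n p d).factorization q := by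
  rw [fact_cval hp]
  constructor
  · intro hq
    have hqp : q ≠ p := Finset.ne_of_mem_erase (Sd_sub d hq)
    have hq1 : q ∈ n.primeFactors := Finset.mem_of_mem_erase (Sd_sub d hq)
    have hq3 : n.factorization q ≠ 0 := by
      rwa [← Nat.support_factorization, Finsupp.mem_support_iff] at hq1
    rw [if_neg hqp, if_pos hq]
    omega
  · rintro ⟨hqp, hpos⟩
    rw [if_neg hqp] at hpos
    by_contra hq
    rw [if_neg hq] at hpos
    omega

include hn hp in
lemma cval_inj {d e : ℕ} (hd : d ∣ n) (he : e ∣ n)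
    (hfd : n.factorization p ≤ d.factorization p)
    (hfe : n.factorization p ≤ e.factorization p)
    (hc : cval n p d = cval n p e) : d = e := by
  have hn0 : n ≠ 0 := by omega
  have hd0 : d ≠ 0 := fun h => hn0 (zero_dvd_iff.1 (h ▸ hd))
  have he0 : e ≠ 0 := fun h => hn0 (zero_dvd_iff.1 (h ▸ he))
  have hS : Sd n p d = Sd n p e := by
    ext q
    rw [Sd_mem_iff hn hp hd, Sd_mem_iff hn hp he, hc]
  have hM : Mval n p d = Mval n p e := by rw [Mval, Mval, hS]
  have hev : eval' n p d = eval' n p e := by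
    have h1 := fact_cval hp (d := d) (r := p)
    have h2 := fact_cval hp (d := e) (r := p)
    rw [if_pos rfl] at h1 h2
    rw [← h1, ← h2, hc]
  have hm : mval n p d = mval n p e := by
    rcases lt_trichotomy (mval n p d) (mval n p e) with hlt | heq | hlt
    · exfalso
      have := rank_mono (M := Mval n p d) (mval_mem (n := n) (p := p) (d := d)) hlt
      rw [hM] at this
      rw [eval', eval', hM] at hev
      omega
    · exact heq
    · exfalso
      have := rank_mono (M := Mval n p e) (mval_mem (n := n) (p := p) (d := e)) hlt
      rw [eval', eval', hM] at hev
      omega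
  apply Nat.factorization_inj (Set.mem_setOf_eq ▸ hd0) (Set.mem_setOf_eq ▸ he0)
  ext r
  rcases eq_or_ne r p with rfl | hr
  · have := fact_le hn hd r
    have := fact_le hn he r
    omega
  by_cases hmem : r ∈ Sd n p d
  · have h1 := fact_mval (n := n) (p := p) (d := d) (r := r)
    have h2 := fact_mval (n := n) (p := p) (d := e) (r := r)
    rw [if_pos hmem] at h1
    rw [if_pos (hS ▸ hmem)] at h2
    rw [← h1, ← h2, hm]
  · by_cases hpf : r ∈ n.primeFactors
    · have hre : r ∈ n.primeFactors.erase p := Finset.mem_erase.2 ⟨hr, hpf⟩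
      have hd1 : ¬ d.factorization r < n.factorization r := fun hlt =>
        hmem (Finset.mem_filter.2 ⟨hre, hlt⟩)
      have he1 : ¬ e.factorization r < n.factorization r := fun hlt =>
        (hS ▸ hmem) (Finset.mem_filter.2 ⟨hre, hlt⟩)
      have := fact_le hn hd r
      have := fact_le hn he r
      omega
    · have : n.factorization r = 0 := by
        rwa [← Nat.support_factorization, Finsupp.notMem_support_iff] at hpf
      have := fact_le hn hd r
      have := fact_le hn he r
      omega

include hn hp in
lemma col_mem
    (hbig : ∏ q ∈ n.primeFactors.erase p, n.factorization q ≤ n.factorization p)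
    {d : ℕ} (hd : d ∣ n) (hd1 : d ≠ 1) (hdn : d ≠ n) : col n p d ∈ KC n p := by
  have hn0 : n ≠ 0 := by omega
  have pp : p.Prime := Nat.prime_of_mem_primeFactors hp
  have hpn : p ∣ n := Nat.dvd_of_mem_primeFactors hp
  have hnp0 : n / p ≠ 0 := Nat.div_ne_zero_iff.2 ⟨pp.pos.ne', Nat.le_of_dvd (by omega) hpn⟩
  rw [KC, Finset.mem_erase, Nat.mem_divisors]
  by_cases hsmall : d.factorization p < n.factorization p
  · rw [col, if_pos hsmall]
    exact ⟨hd1, (dvd_ordc hn hp hd).2 hsmall, hnp0⟩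
  · rw [col, if_neg hsmall]
    exact ⟨cval_ne_one hn hp hd hdn (by omega), cval_dvd hn hp hbig d, hnp0⟩

include hn hp in
lemma col_valid
    (hbig : ∏ q ∈ n.primeFactors.erase p, n.factorization q ≤ n.factorization p)
    {d e : ℕ} (hd : d ∣ n) (hdn : d ≠ n) (he : e ∣ n) (hen : e ≠ n)
    (hne : d ≠ e) (hlcm : Nat.lcm d e ≠ n) : col n p d ≠ col n p e := by
  by_cases hsd : d.factorization p < n.factorization p <;>
    by_cases hse : e.factorization p < n.factorization p
  · rw [col, col, if_pos hsd, if_pos hse]; exact hne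
  · rw [col, col, if_pos hsd, if_neg hse]
    intro hcontra
    apply hlcm
    rw [hcontra]
    exact lcm_cval hn hp hbig he hen (by omega)
  · rw [col, col, if_neg hsd, if_pos hse]
    intro hcontra
    apply hlcm
    rw [← hcontra, Nat.lcm_comm]
    exact lcm_cval hn hp hbig hd hdn (by omega)
  · rw [col, col, if_neg hsd, if_neg hse]
    intro hcontra
    exact hne (cval_inj hn hp hd he (by omega) (by omega) hcontra)

include hn hp in
lemma card_KC :
    (KC n p).card =
      n.factorization p * ∏ q ∈ n.primeFactors.erase p, (n.factorization q + 1) - 1 := by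
  have hn0 : n ≠ 0 := by omega
  have pp : p.Prime := Nat.prime_of_mem_primeFactors hp
  have hpn : p ∣ n := Nat.dvd_of_mem_primeFactors hp
  have hnp0 : n / p ≠ 0 := Nat.div_ne_zero_iff.2 ⟨pp.pos.ne', Nat.le_of_dvd (by omega) hpn⟩
  rw [KC, Finset.card_erase_of_mem (Nat.one_mem_divisors.2 hnp0), card_divisors_ordc hn hp]

include hn hp in
lemma small_of_mem_KC {x : ℕ} (hx : x ∈ KC n p) :
    x ∣ n ∧ x ≠ 1 ∧ x ≠ n ∧ x.factorization p < n.factorization p := by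
  have hn0 : n ≠ 0 := by omega
  have pp : p.Prime := Nat.prime_of_mem_primeFactors hp
  have hpn : p ∣ n := Nat.dvd_of_mem_primeFactors hp
  rw [KC, Finset.mem_erase, Nat.mem_divisors] at hx
  obtain ⟨hx1, hx2, hx3⟩ := hx
  have hxn : x ∣ n := hx2.trans (Nat.div_dvd_of_dvd hpn)
  have hsmall : x.factorization p < n.factorization p := (dvd_ordc hn hp hxn).1 hx2
  refine ⟨hxn, hx1, fun h => ?_, hsmall⟩
  rw [h] at hsmall
  exact absurd hsmall (lt_irrefl _)

include hn hp in
theorem divGraph_colorable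
    (hbig : ∏ q ∈ n.primeFactors.erase p, n.factorization q ≤ n.factorization p) :
    (divGraph n).Colorable ((KC n p).card) := by
  have C : (divGraph n).Coloring {x // x ∈ KC n p} := by
    refine SimpleGraph.Coloring.mk
      (fun d => ⟨col n p d.1, col_mem hn hp hbig d.2.1 d.2.2.1 d.2.2.2⟩) ?_
    rintro ⟨d, hd⟩ ⟨e, he⟩ ⟨hne, hlcm⟩ hcontra
    have : col n p d = col n p e := congrArg Subtype.val hcontra
    exact col_valid hn hp hbig hd.1 hd.2.2 he.1 he.2.2
      (fun h => hne (Subtype.ext h)) hlcm this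
  simpa using C.colorable

include hn hp in
theorem divGraph_clique :
    ∃ s : Finset {d : ℕ // d ∣ n ∧ d ≠ 1 ∧ d ≠ n},
      (divGraph n).IsNClique ((KC n p).card) s := by
  have hn0 : n ≠ 0 := by omega
  refine ⟨(KC n p).attach.map ⟨fun x => ⟨x.1, (small_of_mem_KC hn hp x.2).1,
    (small_of_mem_KC hn hp x.2).2.1, (small_of_mem_KC hn hp x.2).2.2.1⟩, ?_⟩, ?_, ?_⟩
  · rintro ⟨a, ha⟩ ⟨b, hb⟩ h
    exact Subtype.ext (show a = b from congrArg Subtype.val h)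
  · intro x hx y hy hxy
    simp only [Finset.coe_map, Set.mem_image, Finset.mem_coe, Finset.mem_attach] at hx hy
    obtain ⟨⟨a, ha⟩, -, rfl⟩ := hx
    obtain ⟨⟨b, hb⟩, -, rfl⟩ := hy
    change (divGraph n).Adj ⟨a, _⟩ ⟨b, _⟩
    refine ⟨hxy, fun hlcm => ?_⟩
    have ha0 : a ≠ 0 := fun h => hn0 (zero_dvd_iff.1 (h ▸ (small_of_mem_KC hn hp ha).1))
    have hb0 : b ≠ 0 := fun h => hn0 (zero_dvd_iff.1 (h ▸ (small_of_mem_KC hn hp hb).1))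
    have hfl := Nat.factorization_lcm ha0 hb0
    rw [hlcm] at hfl
    have := DFunLike.congr_fun hfl p
    rw [Finsupp.sup_apply] at this
    have h1 := (small_of_mem_KC hn hp ha).2.2.2
    have h2 := (small_of_mem_KC hn hp hb).2.2.2
    omega
  · rw [Finset.card_map, Finset.card_attach]

end Main


noncomputable def divIso (n : ℕ) (hn : 1 < n) : divGraph n ≃g interGraph (ZMod n) := by
  haveI : NeZero n := ⟨by omega⟩
  refine ⟨Equiv.ofBijective (fun d => ⟨Ideal.span {(d.1 : ZMod n)},
      fun h => d.2.2.2 ((span_bot n d.1 d.2.1).1 h),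
      fun h => d.2.2.1 ((span_top n hn d.1 d.2.1).1 h)⟩) ⟨?_, ?_⟩, ?_⟩
  · rintro ⟨d, hd⟩ ⟨e, he⟩ h
    exact Subtype.ext (span_inj n d e hd.1 he.1 (congrArg Subtype.val h))
  · rintro ⟨I, hI⟩
    obtain ⟨d, hd, rfl⟩ := span_surj n I
    refine ⟨⟨d, hd, ?_, ?_⟩, rfl⟩
    · intro h; exact hI.2 ((span_top n hn d hd).2 h)
    · intro h; exact hI.1 ((span_bot n d hd).2 h)
  · rintro ⟨d, hd⟩ ⟨e, he⟩
    have hbot : (Ideal.span {(d : ZMod n)} ⊓ Ideal.span {(e : ZMod n)} = ⊥) ↔ Nat.lcm d e = n := by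
      rw [span_inf n d e hd.1 he.1, span_bot n _ (Nat.lcm_dvd hd.1 he.1)]
    constructor
    · rintro ⟨h1, h2⟩
      exact ⟨fun h => h1 (by cases h; rfl), fun h => h2 (hbot.2 h)⟩
    · rintro ⟨h1, h2⟩
      exact ⟨fun h => h1 (Subtype.ext (span_inj n d e hd.1 he.1 (congrArg Subtype.val h))),
        fun h => h2 (hbot.1 h)⟩
  
lemma isNClique_of_iso {V W : Type*} {G : SimpleGraph V} {H : SimpleGraph W} (e : G ≃g H)
    (k : ℕ) (s : Finset V) (hs : G.IsNClique k s) : ∃ t, H.IsNClique k t := by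
  refine ⟨s.map ⟨e, e.toEquiv.injective⟩, ?_, by simp [hs.2]⟩
  intro x hx y hy hxy
  simp only [Finset.coe_map, Set.mem_image, Finset.mem_coe] at hx hy
  obtain ⟨a, ha, rfl⟩ := hx
  obtain ⟨b, hb, rfl⟩ := hy
  rw [Function.Embedding.coeFn_mk, e.map_adj_iff]
  exact hs.1 ha hb (fun h => hxy (by rw [h]))

lemma cliqueNum_congr {V W : Type*} {G : SimpleGraph V} {H : SimpleGraph W} (e : G ≃g H) :
    G.cliqueNum = H.cliqueNum := by
  unfold SimpleGraph.cliqueNum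
  congr 1
  ext k
  simp only [Set.mem_setOf_eq]
  refine ⟨fun h => ?_, fun h => ?_⟩
  · obtain ⟨s, hs⟩ := h; exact isNClique_of_iso e k s hs
  · obtain ⟨s, hs⟩ := h; exact isNClique_of_iso e.symm k s hs

lemma chromaticNumber_congr {V W : Type*} {G : SimpleGraph V} {H : SimpleGraph W} (e : G ≃g H) :
    G.chromaticNumber = H.chromaticNumber :=
  le_antisymm (SimpleGraph.chromaticNumber_mono_of_hom e.toHom)
    (SimpleGraph.chromaticNumber_mono_of_hom e.symm.toHom)


theorem stmt7 (n : ℕ) (hn : 1 < n) (p : ℕ) (hp : p ∈ n.primeFactors)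
    (hbig : ∏ q ∈ n.primeFactors.erase p, n.factorization q ≤ n.factorization p) :
    (interGraph (ZMod n)).cliqueNum =
      n.factorization p * ∏ q ∈ n.primeFactors.erase p, (n.factorization q + 1) - 1 ∧
    (interGraph (ZMod n)).chromaticNumber =
      ((n.factorization p * ∏ q ∈ n.primeFactors.erase p, (n.factorization q + 1) - 1 : ℕ) : ℕ∞) := by
  haveI : NeZero n := ⟨by omega⟩
  have hn0 : n ≠ 0 := by omega
  have hKC := card_KC hn hp
  have hcolor : (divGraph n).Colorable
      (n.factorization p * ∏ q ∈ n.primeFactors.erase p, (n.factorization q + 1) - 1) :=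
    hKC ▸ divGraph_colorable hn hp hbig
  obtain ⟨s, hs⟩ := divGraph_clique hn hp
  rw [hKC] at hs
  have hfin : Finite {d : ℕ // d ∣ n ∧ d ≠ 1 ∧ d ≠ n} :=
    Finite.of_injective
      (fun d => (⟨d.1, Nat.mem_divisors.2 ⟨d.2.1, hn0⟩⟩ : {x // x ∈ n.divisors}))
      (by rintro ⟨a, _⟩ ⟨b, _⟩ h; exact Subtype.ext (show a = b from congrArg Subtype.val h))
  haveI := Fintype.ofFinite {d : ℕ // d ∣ n ∧ d ≠ 1 ∧ d ≠ n}
  have hcl : (divGraph n).cliqueNum =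
      n.factorization p * ∏ q ∈ n.primeFactors.erase p, (n.factorization q + 1) - 1 := by
    apply le_antisymm
    · obtain ⟨t, ht⟩ := SimpleGraph.exists_isNClique_cliqueNum (G := divGraph n)
      exact ht.2 ▸ ht.1.card_le_of_colorable hcolor
    · exact hs.2 ▸ hs.1.card_le_cliqueNum
  have hchrom : (divGraph n).chromaticNumber =
      ((n.factorization p * ∏ q ∈ n.primeFactors.erase p, (n.factorization q + 1) - 1 : ℕ) : ℕ∞) := by
    apply le_antisymm hcolor.chromaticNumber_le
    have := hs.1.card_le_chromaticNumber
    rwa [hs.2] at this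
  constructor
  · rw [← cliqueNum_congr (divIso n hn)]; exact hcl
  · rw [← chromaticNumber_congr (divIso n hn)]; exact hchrom
end

section
/- Let m ≥ 2 be even and n = (p_1 ⋯ p_m)^α for distinct primes p_i and α ≥ 1. Then the clique number and chromatic number of G(Z/nZ) both equal ∑_{i=0}^{m/2 − 1} C(m,i) α^{m-i} + (1/2)·C(m, m/2)·α^{m/2} − 1. -/
namespace Stmt9Aux

open Finset

variable {m α : ℕ}

abbrev Tup (m α : ℕ) := Fin m → Fin (α + 1)

noncomputable def supp (β : Tup m α) : Finset (Fin m) := univ.filter (fun i => β i ≠ ⊤)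

def tupleGraph (m α : ℕ) : SimpleGraph {β : Tup m α // β ≠ ⊤ ∧ β ≠ ⊥} where
  Adj β γ := β ≠ γ ∧ (β.1 ⊔ γ.1) ≠ ⊤
  symm := ⟨by rintro β γ ⟨h1, h2⟩; exact ⟨h1.symm, by rwa [sup_comm]⟩⟩
  loopless := ⟨by rintro β ⟨h, -⟩; exact h rfl⟩

lemma mem_supp_iff {β : Tup m α} {i : Fin m} : i ∈ supp β ↔ β i ≠ ⊤ := by
  simp [supp]

lemma supp_eq_empty_iff (β : Tup m α) : supp β = ∅ ↔ β = ⊤ := by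
  constructor
  · intro h
    funext i
    have := Finset.eq_empty_iff_forall_notMem.1 h i
    rw [mem_supp_iff, not_not] at this
    exact this
  · intro h
    apply Finset.eq_empty_iff_forall_notMem.2
    intro i hi
    rw [mem_supp_iff, h] at hi
    exact hi rfl

lemma supp_bot (hα : 1 ≤ α) : supp (⊥ : Tup m α) = univ := by
  ext i
  simp only [mem_supp_iff, mem_univ, iff_true]
  intro h
  have h2 := congrArg Fin.val h
  have h0 : (((⊥ : Tup m α) i : Fin (α+1)) : ℕ) = 0 := rfl
  have ht : ((⊤ : Fin (α+1)) : ℕ) = α := rfl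
  omega

lemma sup_ne_top_iff (β γ : Tup m α) :
    β ⊔ γ ≠ ⊤ ↔ (supp β ∩ supp γ).Nonempty := by
  rw [← not_iff_not, not_not, Finset.not_nonempty_iff_eq_empty]
  constructor
  · intro h
    apply Finset.eq_empty_iff_forall_notMem.2
    intro i hi
    rw [mem_inter, mem_supp_iff, mem_supp_iff] at hi
    have := congrFun h i
    simp only [Pi.sup_apply, Pi.top_apply, max_eq_top] at this
    tauto
  · intro h
    funext i
    have := Finset.eq_empty_iff_forall_notMem.1 h i
    rw [mem_inter, mem_supp_iff, mem_supp_iff] at this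
    simp only [Pi.sup_apply, Pi.top_apply, max_eq_top]
    tauto

/-- The fiber of `supp` over `S` is equivalent to `S → Fin α`. -/
noncomputable def fiberEquiv (S : Finset (Fin m)) :
    {β : Tup m α // supp β = S} ≃ ({ i // i ∈ S } → Fin α) where
  toFun β i := ⟨(β.1 i.1).val, by
    have hi : (i : Fin m) ∈ supp β.1 := β.2.symm ▸ i.2
    rw [mem_supp_iff] at hi
    have : (β.1 i.1).val ≠ α := by
      intro hv
      apply hi
      rw [Fin.top_eq_last]
      exact Fin.ext (by simpa using hv)
    omega⟩
  invFun g := ⟨fun i => if h : i ∈ S then ⟨(g ⟨i, h⟩).val, by omega⟩ else ⊤, by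
    ext i
    rw [mem_supp_iff]
    constructor
    · intro h
      by_contra hiS
      simp [dif_neg hiS] at h
    · intro h
      rw [dif_pos h]
      intro htop
      have h2 := congrArg Fin.val htop
      simp [Fin.top_eq_last, Fin.val_last] at h2
      have := (g ⟨i, h⟩).2
      omega⟩
  left_inv β := by
    apply Subtype.ext
    funext i
    by_cases h : i ∈ S
    · simp only [dif_pos h]
    · simp only [dif_neg h]
      have : i ∉ supp β.1 := β.2.symm ▸ h
      rw [mem_supp_iff, not_not] at this
      exact this.symm
  right_inv g := by
    funext i
    simp only [dif_pos i.2]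

lemma card_supp_fiber (S : Finset (Fin m)) :
    ((univ : Finset (Tup m α)).filter (fun β => supp β = S)).card = α ^ S.card := by
  classical
  rw [← Fintype.card_subtype]
  rw [Fintype.card_congr (fiberEquiv S)]
  simp [Fintype.card_fun, Fintype.card_coe]

lemma card_supp_fiber_univ (hα : 1 ≤ α) :
    ((univ : Finset (Tup m α)).filter (fun β => supp β = univ ∧ β ≠ ⊥)).card = α ^ m - 1 := by
  classical
  have h1 : (univ : Finset (Tup m α)).filter (fun β => supp β = univ ∧ β ≠ ⊥)
      = ((univ : Finset (Tup m α)).filter (fun β => supp β = univ)).erase ⊥ := by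
    ext β
    simp only [mem_filter, mem_univ, true_and, Finset.mem_erase]
    tauto
  rw [h1, Finset.card_erase_of_mem (by simp [supp_bot hα]), card_supp_fiber]
  simp

end Stmt9Aux

namespace Stmt9Aux

open Finset

section Main

variable {m α : ℕ}

def i0 (hm : 2 ≤ m) : Fin m := ⟨0, by omega⟩

def Q (hm : 2 ≤ m) (S : Finset (Fin m)) : Prop :=
  m < 2 * S.card ∨ (m = 2 * S.card ∧ i0 hm ∈ S)

instance (hm : 2 ≤ m) : DecidablePred (Q hm) := fun _ => by unfold Q; infer_instance

noncomputable def F0 (hm : 2 ≤ m) : Finset (Finset (Fin m)) := univ.powerset.filter (Q hm)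

noncomputable def wt (α : ℕ) (S : Finset (Fin m)) : ℕ :=
  if S = univ then α ^ m - 1 else α ^ S.card

noncomputable def goodVerts (hm : 2 ≤ m) (α : ℕ) :
    Finset {β : Tup m α // β ≠ ⊤ ∧ β ≠ ⊥} :=
  univ.filter (fun v => Q hm (supp v.1))

variable (hm : 2 ≤ m)

lemma card_le_m (S : Finset (Fin m)) : S.card ≤ m := by
  simpa using S.card_le_univ

lemma card_compl_eq (S : Finset (Fin m)) : Sᶜ.card = m - S.card := by
  simp [Finset.card_compl]

lemma Q_compl (S : Finset (Fin m)) : Q hm Sᶜ ↔ ¬ Q hm S := by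
  have hc : Sᶜ.card = m - S.card := card_compl_eq S
  have hle : S.card ≤ m := card_le_m S
  simp only [Q, hc, Finset.mem_compl]
  constructor
  · rintro (h | ⟨h1, h2⟩)
    · rintro (h' | ⟨h1', -⟩) <;> omega
    · rintro (h' | ⟨-, h2'⟩)
      · omega
      · exact h2 h2'
  · intro h
    push_neg at h
    obtain ⟨h1, h2⟩ := h
    rcases Nat.lt_or_ge (2 * S.card) m with hlt | hge
    · left; omega
    · rcases Nat.lt_or_ge m (2 * S.card) with hlt' | hge'
      · exfalso; omega
      · have hEq : m = 2 * S.card := by omega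
        exact Or.inr ⟨by omega, h2 (by omega)⟩

lemma Q_card {S : Finset (Fin m)} (h : Q hm S) : m ≤ 2 * S.card := by
  rcases h with h | ⟨h, -⟩ <;> omega

lemma Q_nonempty {S : Finset (Fin m)} (h : Q hm S) : S.Nonempty := by
  rw [← Finset.card_pos]
  have := Q_card hm h
  omega

lemma Q_univ : Q hm (univ : Finset (Fin m)) := by
  left
  rw [Finset.card_univ, Fintype.card_fin]
  omega

lemma isClique_goodVerts : (tupleGraph m α).IsClique (goodVerts hm α) := by
  intro v hv w hw hne
  simp only [goodVerts, Finset.coe_filter, Set.mem_setOf_eq, mem_univ, true_and] at hv hw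
  refine ⟨hne, ?_⟩
  rw [sup_ne_top_iff]
  rcases hv with hv | ⟨hv1, hv2⟩ <;> rcases hw with hw | ⟨hw1, hw2⟩
  case inr.inr => exact ⟨i0 hm, Finset.mem_inter.2 ⟨hv2, hw2⟩⟩
  all_goals {
    rw [← Finset.card_pos]
    have h1 := Finset.card_inter_add_card_union (supp v.1) (supp w.1)
    have h2 : (supp v.1 ∪ supp w.1).card ≤ m := card_le_m _
    omega }

lemma goodVerts_card (hα : 1 ≤ α) :
    (goodVerts hm α).card = ∑ S ∈ F0 hm, wt α S := by
  classical
  rw [Finset.card_eq_sum_card_fiberwise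
    (f := fun v => supp v.1) (t := F0 hm)
    (fun v hv => by
      simp only [goodVerts, Finset.mem_coe, mem_filter, mem_univ, true_and] at hv
      simp only [F0, Finset.mem_coe, mem_filter, Finset.mem_powerset]
      exact ⟨Finset.subset_univ _, hv⟩)]
  apply Finset.sum_congr rfl
  intro S hS
  simp only [F0, mem_filter, Finset.mem_powerset] at hS
  by_cases hSu : S = univ
  · subst hSu
    rw [wt, if_pos rfl, ← card_supp_fiber_univ (α := α) (m := m) hα]
    apply Finset.card_bij (fun v _ => v.1)
    · intro v hv
      simp only [goodVerts, mem_filter, mem_univ, true_and] at hv ⊢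
      exact ⟨hv.2, v.2.2⟩
    · intro v1 h1 v2 h2 h
      exact Subtype.ext h
    · intro β hβ
      simp only [mem_filter, mem_univ, true_and] at hβ
      have : Nonempty (Fin m) := ⟨i0 hm⟩
      have hβtop : β ≠ ⊤ := by
        intro h
        rw [← supp_eq_empty_iff] at h
        rw [hβ.1] at h
        exact (Finset.univ_nonempty (α := Fin m)).ne_empty h
      refine ⟨⟨β, hβtop, hβ.2⟩, ?_, rfl⟩
      simp only [goodVerts, mem_filter, mem_univ, true_and]
      exact ⟨hβ.1 ▸ Q_univ hm, hβ.1⟩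
  · rw [wt, if_neg hSu, ← card_supp_fiber (α := α) S]
    apply Finset.card_bij (fun v _ => v.1)
    · intro v hv
      simp only [goodVerts, mem_filter, mem_univ, true_and] at hv ⊢
      exact hv.2
    · intro v1 h1 v2 h2 h
      exact Subtype.ext h
    · intro β hβ
      simp only [mem_filter, mem_univ, true_and] at hβ
      have hβtop : β ≠ ⊤ := by
        intro h
        rw [← supp_eq_empty_iff] at h
        rw [hβ] at h
        exact (Q_nonempty hm (hβ ▸ hS.2)).ne_empty h
      have hβbot : β ≠ ⊥ := by
        intro h
        rw [h, supp_bot hα] at hβ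
        exact hSu hβ.symm
      refine ⟨⟨β, hβtop, hβbot⟩, ?_, rfl⟩
      simp only [goodVerts, mem_filter, mem_univ, true_and]
      exact ⟨hβ ▸ hS.2, hβ⟩

lemma clique_card_le (hα : 1 ≤ α) (C : Finset {β : Tup m α // β ≠ ⊤ ∧ β ≠ ⊥})
    (hC : (tupleGraph m α).IsClique C) :
    C.card ≤ ∑ S ∈ F0 hm, wt α S := by
  classical
  set f : Finset (Fin m) → ℕ := fun S => (C.filter fun v => supp v.1 = S).card with hf
  have hfib : C.card = ∑ S ∈ (univ : Finset (Fin m)).powerset, f S :=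
    Finset.card_eq_sum_card_fiberwise (fun v _ => by
      simp [Finset.mem_powerset])
  have hint : ∀ S S', f S ≠ 0 → f S' ≠ 0 → (S ∩ S').Nonempty := by
    intro S S' h h'
    obtain ⟨v, hv⟩ := Finset.card_pos.1 (Nat.pos_of_ne_zero h)
    obtain ⟨v', hv'⟩ := Finset.card_pos.1 (Nat.pos_of_ne_zero h')
    rw [mem_filter] at hv hv'
    rcases eq_or_ne v v' with rfl | hne
    · rw [← hv.2, ← hv'.2, Finset.inter_self]
      rw [Finset.nonempty_iff_ne_empty, Ne, supp_eq_empty_iff]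
      exact v.2.1
    · have hadj := hC hv.1 hv'.1 hne
      have := hadj.2
      rw [sup_ne_top_iff] at this
      rwa [hv.2, hv'.2] at this
  have hbound : ∀ S, f S ≤ α ^ S.card := by
    intro S
    rw [hf, ← card_supp_fiber (α := α) S]
    apply Finset.card_le_card_of_injOn (fun v => v.1)
    · intro v hv
      simp only [Finset.mem_coe, mem_filter] at hv ⊢
      exact ⟨mem_univ _, hv.2⟩
    · intro v1 _ v2 _ h
      exact Subtype.ext h
  have hbound_univ : f univ ≤ α ^ m - 1 := by
    rw [hf, ← card_supp_fiber_univ (α := α) (m := m) hα]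
    apply Finset.card_le_card_of_injOn (fun v => v.1)
    · intro v hv
      simp only [Finset.mem_coe, mem_filter] at hv ⊢
      exact ⟨mem_univ _, hv.2, v.2.2⟩
    · intro v1 _ v2 _ h
      exact Subtype.ext h
  have hempty : f ∅ = 0 := by
    rw [hf, Finset.card_eq_zero, Finset.filter_eq_empty_iff]
    intro v _
    intro h
    exact v.2.1 ((supp_eq_empty_iff _).1 h)
  have hsplit : ∑ S ∈ (univ : Finset (Fin m)).powerset, f S
      = ∑ S ∈ F0 hm, f S + ∑ S ∈ univ.powerset.filter (fun S => ¬ Q hm S), f S := by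
    rw [F0]
    exact (Finset.sum_filter_add_sum_filter_not _ _ _).symm
  have hre : ∑ S ∈ univ.powerset.filter (fun S => ¬ Q hm S), f S = ∑ S ∈ F0 hm, f Sᶜ := by
    apply Finset.sum_nbij' (i := fun S => Sᶜ) (j := fun S => Sᶜ)
    · intro S hS
      simp only [mem_filter, Finset.mem_powerset] at hS
      simp only [F0, mem_filter, Finset.mem_powerset]
      exact ⟨Finset.subset_univ _, (Q_compl hm S).2 hS.2⟩
    · intro S hS
      simp only [F0, mem_filter, Finset.mem_powerset] at hS
      simp only [mem_filter, Finset.mem_powerset]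
      refine ⟨Finset.subset_univ _, ?_⟩
      have h2 := Q_compl hm Sᶜ
      rw [compl_compl] at h2
      exact h2.mp hS.2
    · intro S _; exact compl_compl S
    · intro S _; exact compl_compl S
    · intro S _; rw [compl_compl]
  rw [hfib, hsplit, hre, ← Finset.sum_add_distrib]
  apply Finset.sum_le_sum
  intro S hS
  simp only [F0, mem_filter, Finset.mem_powerset] at hS
  have hQ : Q hm S := hS.2
  by_cases hSu : S = univ
  · subst hSu
    rw [Finset.compl_univ, hempty, add_zero, wt, if_pos rfl]
    exact hbound_univ
  · rw [wt, if_neg hSu]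
    have hdisj : ¬(S ∩ Sᶜ).Nonempty := by
      simp [Finset.inter_compl]
    have h0 : f S = 0 ∨ f Sᶜ = 0 := by
      by_contra h
      push_neg at h
      exact hdisj (hint _ _ h.1 h.2)
    have hcard : Sᶜ.card ≤ S.card := by
      have h1 := card_compl_eq S
      have h2 := Q_card hm hQ
      omega
    rcases h0 with h0 | h0
    · rw [h0, zero_add]
      exact (hbound Sᶜ).trans (Nat.pow_le_pow_right hα hcard)
    · rw [h0, add_zero]
      exact hbound S

lemma F0_sum_eq (heven : Even m) (hα : 1 ≤ α) :
    ∑ S ∈ F0 hm, wt α S =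
      (∑ i ∈ Finset.range (m / 2), m.choose i * α ^ (m - i)) +
        m.choose (m / 2) * α ^ (m / 2) / 2 - 1 := by
  classical
  obtain ⟨k, hk⟩ := heven
  set Fbig : Finset (Finset (Fin m)) := univ.powerset.filter (fun S => m < 2 * S.card) with hFbig
  set Fmid : Finset (Finset (Fin m)) :=
    univ.powerset.filter (fun S => m = 2 * S.card ∧ i0 hm ∈ S) with hFmid
  -- split F0 sum of α^card into big + mid
  have hF0split : ∀ g : Finset (Fin m) → ℕ,
      ∑ S ∈ F0 hm, g S = ∑ S ∈ Fbig, g S + ∑ S ∈ Fmid, g S := by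
    intro g
    rw [F0]
    have : (univ.powerset.filter (Q hm) : Finset (Finset (Fin m))) = Fbig ∪ Fmid := by
      rw [hFbig, hFmid, ← Finset.filter_or]
      rfl
    rw [this, Finset.sum_union]
    rw [Finset.disjoint_left]
    intro S h1 h2
    simp only [hFbig, hFmid, mem_filter] at h1 h2
    omega
  -- step 1 : ∑ wt = ∑ α^card - 1
  have huniv : (univ : Finset (Fin m)) ∈ F0 hm := by
    simp only [F0, mem_filter, Finset.mem_powerset]
    exact ⟨Finset.Subset.refl _, Q_univ hm⟩
  have e1 : wt α (univ : Finset (Fin m)) + ∑ S ∈ (F0 hm).erase univ, wt α S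
      = ∑ S ∈ F0 hm, wt α S := Finset.add_sum_erase _ _ huniv
  have e2 : α ^ ((univ : Finset (Fin m)).card) + ∑ S ∈ (F0 hm).erase univ, α ^ S.card
      = ∑ S ∈ F0 hm, α ^ S.card := Finset.add_sum_erase _ (fun S => α ^ S.card) huniv
  have e3 : ∑ S ∈ (F0 hm).erase univ, wt α S = ∑ S ∈ (F0 hm).erase univ, α ^ S.card := by
    apply Finset.sum_congr rfl
    intro S hS
    rw [wt, if_neg (Finset.mem_erase.1 hS).1]
  have hwu : wt α (univ : Finset (Fin m)) = α ^ m - 1 := by rw [wt, if_pos rfl]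
  have hcu : (univ : Finset (Fin m)).card = m := by
    rw [Finset.card_univ, Fintype.card_fin]
  have hpow1 : 1 ≤ α ^ m := Nat.one_le_pow _ _ (by omega)
  have step1 : ∑ S ∈ F0 hm, wt α S = (∑ S ∈ F0 hm, α ^ S.card) - 1 := by
    rw [hwu, e3] at e1
    rw [hcu] at e2
    omega
  -- step 3 : big sum
  have hbig : ∑ S ∈ Fbig, α ^ S.card
      = ∑ i ∈ Finset.range (m / 2), m.choose i * α ^ (m - i) := by
    have hgroup : ∑ j ∈ (Finset.range (m+1)).filter (fun j => m < 2 * j),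
        ∑ S ∈ Fbig.filter (fun S => S.card = j), α ^ S.card = ∑ S ∈ Fbig, α ^ S.card := by
      apply Finset.sum_fiberwise_of_maps_to
      intro S hS
      simp only [hFbig, mem_filter, Finset.mem_powerset] at hS
      simp only [mem_filter, Finset.mem_range]
      have := card_le_m S
      exact ⟨by omega, hS.2⟩
    rw [← hgroup]
    have hinner : ∀ j ∈ (Finset.range (m+1)).filter (fun j => m < 2 * j),
        ∑ S ∈ Fbig.filter (fun S => S.card = j), α ^ S.card = m.choose j * α ^ j := by
      intro j hj
      simp only [mem_filter, Finset.mem_range] at hj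
      have : Fbig.filter (fun S => S.card = j) = Finset.powersetCard j (univ : Finset (Fin m)) := by
        ext S
        simp only [hFbig, mem_filter, Finset.mem_powerset, Finset.mem_powersetCard]
        constructor
        · rintro ⟨⟨h1, -⟩, h3⟩
          exact ⟨h1, h3⟩
        · rintro ⟨h1, h2⟩
          exact ⟨⟨h1, by omega⟩, h2⟩
      rw [this]
      rw [Finset.sum_congr rfl (fun S hS => by
        rw [(Finset.mem_powersetCard.1 hS).2])]
      rw [Finset.sum_const, Finset.card_powersetCard, hcu, smul_eq_mul]
    rw [Finset.sum_congr rfl hinner]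
    symm
    apply Finset.sum_nbij' (i := fun i => m - i) (j := fun j => m - j)
    · intro i hi
      simp only [Finset.mem_range] at hi
      simp only [mem_filter, Finset.mem_range]
      omega
    · intro j hj
      simp only [mem_filter, Finset.mem_range] at hj
      simp only [Finset.mem_range]
      omega
    · intro i hi
      simp only [Finset.mem_range] at hi
      omega
    · intro j hj
      simp only [mem_filter, Finset.mem_range] at hj
      omega
    · intro i hi
      simp only [Finset.mem_range] at hi
      rw [Nat.choose_symm (by omega)]
  -- step 4/5 : mid sum
  have hmid : ∑ S ∈ Fmid, α ^ S.card = Fmid.card * α ^ (m / 2) := by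
    rw [Finset.sum_congr rfl (fun S hS => by
      have h1 : m = 2 * S.card := (mem_filter.1 hS).2.1
      have : S.card = m / 2 := by omega
      rw [this])]
    rw [Finset.sum_const, smul_eq_mul]
  have hmidcard : 2 * Fmid.card = m.choose (m / 2) := by
    set Fmid' : Finset (Finset (Fin m)) :=
      univ.powerset.filter (fun S => m = 2 * S.card ∧ i0 hm ∉ S) with hFmid'
    have hcc : Fmid.card = Fmid'.card := by
      apply Finset.card_bij (fun S _ => Sᶜ)
      · intro S hS
        simp only [hFmid, mem_filter, Finset.mem_powerset] at hS
        simp only [hFmid', mem_filter, Finset.mem_powerset, Finset.mem_compl]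
        have := card_compl_eq S
        exact ⟨Finset.subset_univ _, by omega, fun h => h hS.2.2⟩
      · intro S1 _ S2 _ h
        have := congrArg (fun X => Xᶜ) h
        simpa [compl_compl] using this
      · intro S' hS'
        simp only [hFmid', mem_filter, Finset.mem_powerset] at hS'
        refine ⟨S'ᶜ, ?_, compl_compl S'⟩
        simp only [hFmid, mem_filter, Finset.mem_powerset, Finset.mem_compl]
        have := card_compl_eq S'
        exact ⟨Finset.subset_univ _, by omega, fun h => hS'.2.2 h⟩
    have hun : Fmid ∪ Fmid' = Finset.powersetCard (m / 2) (univ : Finset (Fin m)) := by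
      ext S
      simp only [hFmid, hFmid', ← Finset.filter_or, mem_filter, Finset.mem_powerset,
        Finset.mem_powersetCard]
      constructor
      · rintro ⟨h1, (⟨h2, -⟩ | ⟨h2, -⟩)⟩ <;> exact ⟨h1, by omega⟩
      · rintro ⟨h1, h2⟩
        refine ⟨h1, ?_⟩
        by_cases h3 : i0 hm ∈ S
        · left; exact ⟨by omega, h3⟩
        · right; exact ⟨by omega, h3⟩
    have hdisj : Disjoint Fmid Fmid' := by
      rw [Finset.disjoint_left]
      intro S h1 h2
      simp only [hFmid, hFmid', mem_filter] at h1 h2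
      exact h2.2.2 h1.2.2
    have := Finset.card_union_of_disjoint hdisj
    rw [hun, Finset.card_powersetCard, hcu] at this
    omega
  have hdiv : m.choose (m / 2) * α ^ (m / 2) / 2 = Fmid.card * α ^ (m / 2) := by
    rw [← hmidcard, mul_assoc, Nat.mul_div_cancel_left _ (by norm_num)]
  rw [step1, hF0split, hbig, hmid, hdiv]

include hm in
theorem tuple_cliqueNum (heven : Even m) (hα : 1 ≤ α) :
    (tupleGraph m α).cliqueNum =
      (∑ i ∈ Finset.range (m / 2), m.choose i * α ^ (m - i)) +
        m.choose (m / 2) * α ^ (m / 2) / 2 - 1 := by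
  classical
  apply le_antisymm
  · obtain ⟨s, hs⟩ := SimpleGraph.exists_isNClique_cliqueNum (G := tupleGraph m α)
    rw [← hs.2, ← F0_sum_eq hm heven hα]
    exact clique_card_le hm hα s hs.1
  · rw [← F0_sum_eq hm heven hα, ← goodVerts_card hm hα]
    exact SimpleGraph.IsClique.card_le_cliqueNum (G := tupleGraph m α)
      (tc := isClique_goodVerts hm)

lemma zero_ne_top' (hα : 1 ≤ α) : (0 : Fin (α + 1)) ≠ ⊤ := by
  intro h
  have := congrArg Fin.val h
  have ht : ((⊤ : Fin (α + 1)) : ℕ) = α := rfl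
  simp only [Fin.val_zero, ht] at this
  omega

noncomputable def pick (S : Finset (Fin m)) : Fin m → Fin m :=
  if h : ∃ f : Fin m → Fin m, (∀ a ∈ S, ∀ b ∈ S, f a = f b → a = b) ∧ ∀ i ∈ S, f i ∈ Sᶜ
  then h.choose else id

lemma pick_spec (S : Finset (Fin m)) (h : S.card ≤ Sᶜ.card) :
    (∀ a ∈ S, ∀ b ∈ S, pick S a = pick S b → a = b) ∧ ∀ i ∈ S, pick S i ∈ Sᶜ := by
  classical
  have hcard : Fintype.card {i // i ∈ S} ≤ Fintype.card {i // i ∈ Sᶜ} := by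
    simpa only [Fintype.card_coe] using h
  obtain ⟨e⟩ := Function.Embedding.nonempty_of_card_le hcard
  have hex : ∃ f : Fin m → Fin m,
      (∀ a ∈ S, ∀ b ∈ S, f a = f b → a = b) ∧ ∀ i ∈ S, f i ∈ Sᶜ := by
    refine ⟨fun i => if hi : i ∈ S then (e ⟨i, hi⟩ : Fin m) else i, ?_, ?_⟩
    · intro a ha b hb hab
      simp only [dif_pos ha, dif_pos hb] at hab
      have := e.injective (Subtype.ext hab)
      exact congrArg Subtype.val this
    · intro i hi
      simp only [dif_pos hi]
      exact (e ⟨i, hi⟩).2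
  unfold pick
  rw [dif_pos hex]
  exact hex.choose_spec

noncomputable def mateFun (β : Tup m α) : Tup m α := fun j =>
  if j ∈ supp β then ⊤
  else if h : ∃ i, i ∈ supp β ∧ pick (supp β) i = j then β h.choose else 0

lemma mateFun_ne_top (hα : 1 ≤ α) (β : Tup m α) (j : Fin m) (hj : j ∉ supp β) :
    mateFun β j ≠ ⊤ := by
  unfold mateFun
  rw [if_neg hj]
  split
  · next h => exact mem_supp_iff.1 h.choose_spec.1
  · exact zero_ne_top' hα

lemma supp_mateFun (hα : 1 ≤ α) (β : Tup m α) : supp (mateFun β) = (supp β)ᶜ := by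
  ext j
  rw [mem_supp_iff, Finset.mem_compl]
  by_cases hj : j ∈ supp β
  · have : mateFun β j = ⊤ := by unfold mateFun; rw [if_pos hj]
    simp [this, hj]
  · simp [mateFun_ne_top hα β j hj, hj]

lemma mateFun_pick (β : Tup m α) (hc : (supp β).card ≤ (supp β)ᶜ.card)
    (i : Fin m) (hi : i ∈ supp β) : mateFun β (pick (supp β) i) = β i := by
  obtain ⟨hinj, hmap⟩ := pick_spec (supp β) hc
  have hj : pick (supp β) i ∉ supp β := Finset.mem_compl.1 (hmap i hi)
  have hex : ∃ i', i' ∈ supp β ∧ pick (supp β) i' = pick (supp β) i := ⟨i, hi, rfl⟩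
  unfold mateFun
  rw [if_neg hj, dif_pos hex]
  have hspec := hex.choose_spec
  rw [hinj _ hspec.1 _ hi hspec.2]

include hm in
theorem tuple_colorable (heven : Even m) (hα : 1 ≤ α) :
    (tupleGraph m α).Colorable (∑ S ∈ F0 hm, wt α S) := by
  classical
  have hcardle : ∀ β : Tup m α, ¬ Q hm (supp β) → (supp β).card ≤ (supp β)ᶜ.card := by
    intro β hQ
    have h1 := card_compl_eq (supp β)
    have h2 : ¬ (m < 2 * (supp β).card) := fun h => hQ (Or.inl h)
    have h3 := card_le_m (supp β)
    omega
  -- the mate of a bad vertex, as a vertex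
  have hmate : ∀ v : {β : Tup m α // β ≠ ⊤ ∧ β ≠ ⊥}, ¬ Q hm (supp v.1) →
      (mateFun v.1 ≠ ⊤ ∧ mateFun v.1 ≠ ⊥) ∧ Q hm (supp (mateFun v.1)) := by
    intro v hQ
    have hsupp := supp_mateFun hα v.1
    have hQc : Q hm (supp (mateFun v.1)) := by
      rw [hsupp]
      exact (Q_compl hm _).2 hQ
    refine ⟨⟨?_, ?_⟩, hQc⟩
    · intro h
      rw [← supp_eq_empty_iff] at h
      rw [h] at hQc
      have := Q_card hm hQc
      simp only [Finset.card_empty] at this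
      omega
    · intro h
      have hne : (supp v.1).Nonempty := by
        rw [Finset.nonempty_iff_ne_empty]
        intro h'
        exact v.2.1 ((supp_eq_empty_iff _).1 h')
      obtain ⟨i, hi⟩ := hne
      have h1 : mateFun v.1 i = ⊤ := by unfold mateFun; rw [if_pos hi]
      rw [h] at h1
      have h2 : (((⊥ : Tup m α) i : Fin (α+1)) : ℕ) = 0 := rfl
      have h3 := congrArg Fin.val h1
      have ht : ((⊤ : Fin (α + 1)) : ℕ) = α := rfl
      omega
  let col : {β : Tup m α // β ≠ ⊤ ∧ β ≠ ⊥} →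
      {v : {β : Tup m α // β ≠ ⊤ ∧ β ≠ ⊥} // Q hm (supp v.1)} := fun v =>
    if h : Q hm (supp v.1) then ⟨v, h⟩
    else ⟨⟨mateFun v.1, (hmate v h).1⟩, (hmate v h).2⟩
  have hproper : ∀ {v w}, (tupleGraph m α).Adj v w → col v ≠ col w := by
    intro v w hadj hcol
    obtain ⟨hne, hsup⟩ := hadj
    rw [sup_ne_top_iff] at hsup
    by_cases h1 : Q hm (supp v.1) <;> by_cases h2 : Q hm (supp w.1)
    · rw [show col v = ⟨v, h1⟩ from dif_pos h1, show col w = ⟨w, h2⟩ from dif_pos h2] at hcol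
      exact hne (congrArg Subtype.val hcol)
    · rw [show col v = ⟨v, h1⟩ from dif_pos h1,
        show col w = ⟨⟨mateFun w.1, (hmate w h2).1⟩, (hmate w h2).2⟩ from dif_neg h2] at hcol
      have hv : v.1 = mateFun w.1 := congrArg (fun x => x.1.1) hcol
      have : supp v.1 = (supp w.1)ᶜ := by rw [hv, supp_mateFun hα]
      rw [this] at hsup
      rw [Finset.inter_comm, Finset.inter_compl] at hsup
      exact Finset.not_nonempty_empty hsup
    · rw [show col w = ⟨w, h2⟩ from dif_pos h2,
        show col v = ⟨⟨mateFun v.1, (hmate v h1).1⟩, (hmate v h1).2⟩ from dif_neg h1] at hcol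
      have hw : mateFun v.1 = w.1 := congrArg (fun x => x.1.1) hcol
      have : supp w.1 = (supp v.1)ᶜ := by rw [← hw, supp_mateFun hα]
      rw [this] at hsup
      rw [Finset.inter_compl] at hsup
      exact Finset.not_nonempty_empty hsup
    · rw [show col v = ⟨⟨mateFun v.1, (hmate v h1).1⟩, (hmate v h1).2⟩ from dif_neg h1,
        show col w = ⟨⟨mateFun w.1, (hmate w h2).1⟩, (hmate w h2).2⟩ from dif_neg h2] at hcol
      have hmm : mateFun v.1 = mateFun w.1 := congrArg (fun x => x.1.1) hcol
      have hS : supp v.1 = supp w.1 := by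
        have := congrArg supp hmm
        rw [supp_mateFun hα, supp_mateFun hα] at this
        rw [← compl_compl (supp v.1), this, compl_compl]
      apply hne
      apply Subtype.ext
      funext i
      by_cases hi : i ∈ supp v.1
      · have e1 := mateFun_pick v.1 (hcardle _ h1) i hi
        have e2 := mateFun_pick w.1 (hcardle _ h2) i (hS ▸ hi)
        rw [← e1, ← e2, hmm, hS]
      · have hv : v.1 i = ⊤ := by
          by_contra h
          exact hi (mem_supp_iff.2 h)
        have hw : w.1 i = ⊤ := by
          by_contra h
          exact (hS ▸ hi) (mem_supp_iff.2 h)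
        rw [hv, hw]
  have C : (tupleGraph m α).Coloring
      {v : {β : Tup m α // β ≠ ⊤ ∧ β ≠ ⊥} // Q hm (supp v.1)} :=
    SimpleGraph.Coloring.mk col hproper
  have := C.colorable
  have hcardK : Fintype.card {v : {β : Tup m α // β ≠ ⊤ ∧ β ≠ ⊥} // Q hm (supp v.1)}
      = ∑ S ∈ F0 hm, wt α S := by
    rw [Fintype.card_subtype, ← goodVerts_card hm hα]
    rfl
  rwa [hcardK] at this

include hm in
theorem tuple_chromaticNumber (heven : Even m) (hα : 1 ≤ α) :
    (tupleGraph m α).chromaticNumber =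
      (((∑ i ∈ Finset.range (m / 2), m.choose i * α ^ (m - i)) +
        m.choose (m / 2) * α ^ (m / 2) / 2 - 1 : ℕ) : ℕ∞) := by
  apply le_antisymm
  · rw [← F0_sum_eq hm heven hα]
    exact (tuple_colorable hm heven hα).chromaticNumber_le
  · rw [← F0_sum_eq hm heven hα, ← goodVerts_card hm hα]
    exact SimpleGraph.IsClique.card_le_chromaticNumber (isClique_goodVerts hm)

end Main
section NT

variable {m α : ℕ} (p : Fin m → ℕ) (hp : ∀ i, (p i).Prime) (hinj : Function.Injective p)

set_option linter.unusedSectionVars false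

include hp hinj

def Pr (β : Tup m α) : ℕ := ∏ i, p i ^ (β i : ℕ)

lemma Pr_ne_zero (β : Tup m α) : Pr p β ≠ 0 :=
  Finset.prod_ne_zero_iff.2 fun i _ => pow_ne_zero _ (hp i).pos.ne'

lemma factorization_Pr (β : Tup m α) (i : Fin m) :
    (Pr p β).factorization (p i) = β i := by
  rw [Pr, Nat.factorization_prod (fun j _ => pow_ne_zero _ (hp j).pos.ne')]
  rw [Finsupp.finset_sum_apply]
  rw [Finset.sum_eq_single i]
  · rw [Nat.Prime.factorization_pow (hp i), Finsupp.single_apply, if_pos rfl]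
  · intro j _ hji
    rw [Nat.Prime.factorization_pow (hp j), Finsupp.single_apply,
      if_neg (fun h => hji (hinj h))]
  · intro h
    exact absurd (Finset.mem_univ i) h

lemma Pr_dvd_iff (β γ : Tup m α) : Pr p β ∣ Pr p γ ↔ β ≤ γ := by
  constructor
  · intro h i
    have h2 := (Nat.factorization_le_iff_dvd (Pr_ne_zero p hp hinj β) (Pr_ne_zero p hp hinj γ)).2 h
    have h3 := Finsupp.le_def.1 h2 (p i)
    rw [factorization_Pr p hp hinj, factorization_Pr p hp hinj] at h3
    exact h3
  · intro h
    apply Finset.prod_dvd_prod_of_dvd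
    intro i _
    exact pow_dvd_pow _ (h i)

lemma prime_eq_of_dvd_Pr (q : ℕ) (hq : q.Prime) (β : Tup m α) (h : q ∣ Pr p β) :
    ∃ i, p i = q := by
  obtain ⟨i, -, hdvd⟩ := hq.prime.exists_mem_finset_dvd h
  exact ⟨i, ((Nat.prime_dvd_prime_iff_eq hq (hp i)).1 (hq.dvd_of_dvd_pow hdvd)).symm⟩

lemma Pr_top : Pr p (⊤ : Tup m α) = ∏ i, p i ^ α := rfl

lemma Pr_surj (d : ℕ) (hd0 : d ≠ 0) (hdn : d ∣ ∏ i, p i ^ α) :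
    ∃ β : Tup m α, Pr p β = d := by
  have hn0 : (∏ i, p i ^ α) ≠ 0 :=
    Finset.prod_ne_zero_iff.2 fun i _ => pow_ne_zero _ (hp i).pos.ne'
  have hfact := (Nat.factorization_le_iff_dvd hd0 hn0).2 hdn
  have hle : ∀ i, d.factorization (p i) ≤ α := by
    intro i
    have h1 := Finsupp.le_def.1 hfact (p i)
    rw [← Pr_top (α := α) p hp hinj, factorization_Pr p hp hinj] at h1
    exact h1
  refine ⟨fun i => ⟨d.factorization (p i), by have := hle i; omega⟩, ?_⟩
  apply Nat.eq_of_factorization_eq (Pr_ne_zero p hp hinj _) hd0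
  intro q
  by_cases hq : q.Prime
  · by_cases hex : ∃ i, p i = q
    · obtain ⟨i, rfl⟩ := hex
      rw [factorization_Pr p hp hinj]
    · have h1 : ¬ q ∣ Pr p (fun i => (⟨d.factorization (p i), by have := hle i; omega⟩ : Fin (α+1))) :=
        fun h => hex (prime_eq_of_dvd_Pr p hp hinj q hq _ h)
      have h2 : ¬ q ∣ d := fun h =>
        hex (prime_eq_of_dvd_Pr p hp hinj q hq ⊤ (by rw [Pr_top p hp hinj]; exact h.trans hdn))
      rw [Nat.factorization_eq_zero_of_not_dvd h1, Nat.factorization_eq_zero_of_not_dvd h2]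
  · rw [Nat.factorization_eq_zero_of_not_prime _ hq, Nat.factorization_eq_zero_of_not_prime _ hq]

def gIdeal (β : Tup m α) : Ideal ℤ := Ideal.span {(Pr p β : ℤ)}

lemma gIdeal_le_iff (β γ : Tup m α) : gIdeal p β ≤ gIdeal p γ ↔ γ ≤ β := by
  rw [gIdeal, gIdeal, Ideal.span_singleton_le_span_singleton, Int.natCast_dvd_natCast,
    Pr_dvd_iff p hp hinj]

variable (n : ℕ) (hn : n = ∏ i, p i ^ α)

include hn

omit hp hinj hn in
lemma ker_mk_eq : Ideal.comap (Ideal.Quotient.mk (Ideal.span {(n:ℤ)}))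
    (⊥ : Ideal (ℤ ⧸ Ideal.span {(n:ℤ)})) = Ideal.span {(n:ℤ)} := by
  rw [← RingHom.ker_eq_comap_bot, Ideal.mk_ker]

lemma span_n_le (β : Tup m α) : Ideal.span {(n:ℤ)} ≤ gIdeal p β := by
  apply Ideal.span_singleton_le_span_singleton.2
  apply Int.natCast_dvd_natCast.2
  rw [hn, ← Pr_top (α := α) p hp hinj]
  exact (Pr_dvd_iff p hp hinj β ⊤).2 le_top

lemma gIdeal_surj (J : Ideal ℤ) (hJ : Ideal.span {(n:ℤ)} ≤ J) :
    ∃ β : Tup m α, gIdeal p β = J := by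
  have hn0 : n ≠ 0 := by
    rw [hn]
    exact Finset.prod_ne_zero_iff.2 fun i _ => pow_ne_zero _ (hp i).pos.ne'
  obtain ⟨a, ha⟩ := (IsPrincipalIdealRing.principal J).principal
  have hJ' : J = Ideal.span {((a.natAbs : ℕ) : ℤ)} := by
    rw [Int.span_natAbs]
    exact ha
  have hdvd : ((a.natAbs : ℕ) : ℤ) ∣ (n : ℤ) := by
    apply Ideal.span_singleton_le_span_singleton.1
    rw [← hJ']
    exact hJ
  have hdvdn : a.natAbs ∣ n := Int.natCast_dvd_natCast.1 hdvd
  have hd0 : a.natAbs ≠ 0 := by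
    intro h
    rw [h] at hdvdn
    exact hn0 (Nat.eq_zero_of_zero_dvd hdvdn)
  obtain ⟨β, hβ⟩ := Pr_surj p hp hinj a.natAbs hd0 (hn ▸ hdvdn)
  exact ⟨β, by rw [gIdeal, hβ, ← hJ']⟩

noncomputable def tupOrderIso :
    (Tup m α)ᵒᵈ ≃o {J : Ideal ℤ //
      Ideal.comap (Ideal.Quotient.mk (Ideal.span {(n:ℤ)}))
        (⊥ : Ideal (ℤ ⧸ Ideal.span {(n:ℤ)})) ≤ J} where
  toEquiv := Equiv.ofBijective
    (fun β => ⟨gIdeal p (OrderDual.ofDual β),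
      (ker_mk_eq n).trans_le (span_n_le p hp hinj n hn (OrderDual.ofDual β))⟩)
    (by
      constructor
      · intro β γ h
        have h2 : gIdeal p (OrderDual.ofDual β) = gIdeal p (OrderDual.ofDual γ) :=
          congrArg Subtype.val h
        have h3 := (gIdeal_le_iff p hp hinj _ _).1 h2.le
        have h4 := (gIdeal_le_iff p hp hinj _ _).1 h2.ge
        exact OrderDual.ofDual.injective (le_antisymm h4 h3)
      · intro J
        obtain ⟨β, hβ⟩ := gIdeal_surj p hp hinj n hn J.1 ((ker_mk_eq n).symm.trans_le J.2)
        exact ⟨OrderDual.toDual β, Subtype.ext hβ⟩)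
  map_rel_iff' := by
    intro β γ
    change (⟨gIdeal p (OrderDual.ofDual β), _⟩ : {J : Ideal ℤ // Ideal.comap (Ideal.Quotient.mk (Ideal.span {(n:ℤ)})) (⊥ : Ideal (ℤ ⧸ Ideal.span {(n:ℤ)})) ≤ J}) ≤ ⟨gIdeal p (OrderDual.ofDual γ), _⟩ ↔ β ≤ γ
    rw [Subtype.mk_le_mk]
    rw [gIdeal_le_iff p hp hinj]
    rfl

noncomputable def fullIso : Ideal (ZMod n) ≃o (Tup m α)ᵒᵈ :=
  (Ideal.relIsoOfBijective ((Int.quotientSpanNatEquivZMod n).toRingHom)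
    (Int.quotientSpanNatEquivZMod n).bijective).trans
    ((Ideal.relIsoOfSurjective (Ideal.Quotient.mk (Ideal.span {(n:ℤ)}))
      Ideal.Quotient.mk_surjective).trans (tupOrderIso p hp hinj n hn).symm)

end NT

section Transport

variable {V W : Type*} {G : SimpleGraph V} {H : SimpleGraph W}

lemma isNClique_map_iso (e : G ≃g H) {k : ℕ} {s : Finset V} (h : G.IsNClique k s) :
    H.IsNClique k (s.map e.toEquiv.toEmbedding) := by
  constructor
  · intro x hx y hy hxy
    simp only [Finset.coe_map, Set.mem_image, Finset.mem_coe] at hx hy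
    obtain ⟨a, ha, rfl⟩ := hx
    obtain ⟨b, hb, rfl⟩ := hy
    have hab : a ≠ b := fun h' => hxy (by rw [h'])
    exact e.map_rel_iff.2 (h.1 ha hb hab)
  · rw [Finset.card_map]
    exact h.2

lemma cliqueNum_eq_of_iso (e : G ≃g H) : G.cliqueNum = H.cliqueNum := by
  unfold SimpleGraph.cliqueNum
  congr 1
  ext k
  exact ⟨fun ⟨s, hs⟩ => ⟨_, isNClique_map_iso e hs⟩,
    fun ⟨s, hs⟩ => ⟨_, isNClique_map_iso e.symm hs⟩⟩

lemma chromaticNumber_eq_of_iso (e : G ≃g H) : G.chromaticNumber = H.chromaticNumber :=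
  le_antisymm (SimpleGraph.chromaticNumber_mono_of_hom e.toEmbedding.toHom)
    (SimpleGraph.chromaticNumber_mono_of_hom e.symm.toEmbedding.toHom)

end Transport

section GraphIso

variable {m α : ℕ} (p : Fin m → ℕ) (hp : ∀ i, (p i).Prime) (hinj : Function.Injective p)
variable (n : ℕ) (hn : n = ∏ i, p i ^ α)

noncomputable def graphIso : interGraph (ZMod n) ≃g tupleGraph m α := by
  have e := fullIso p hp hinj n hn
  have hbot : ∀ I : Ideal (ZMod n), I = ⊥ ↔ OrderDual.ofDual (e I) = ⊤ := by
    intro I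
    rw [← e.injective.eq_iff, e.map_bot]
    constructor
    · intro h; rw [h]; rfl
    · intro h
      apply OrderDual.ofDual.injective
      exact h
  have htop : ∀ I : Ideal (ZMod n), I = ⊤ ↔ OrderDual.ofDual (e I) = ⊥ := by
    intro I
    rw [← e.injective.eq_iff, e.map_top]
    constructor
    · intro h; rw [h]; rfl
    · intro h
      apply OrderDual.ofDual.injective
      exact h
  have hinf : ∀ I J : Ideal (ZMod n),
      I ⊓ J = ⊥ ↔ OrderDual.ofDual (e I) ⊔ OrderDual.ofDual (e J) = ⊤ := by
    intro I J
    rw [← e.injective.eq_iff, e.map_bot, e.map_inf]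
    constructor
    · intro h
      apply OrderDual.toDual.injective
      exact h
    · intro h
      apply OrderDual.ofDual.injective
      exact h
  exact
  { toEquiv := Equiv.subtypeEquiv (e.toEquiv.trans OrderDual.ofDual)
      (fun I => by
        simp only [Equiv.trans_apply]
        constructor
        · rintro ⟨h1, h2⟩
          exact ⟨fun h => h1 ((hbot I).2 h), fun h => h2 ((htop I).2 h)⟩
        · rintro ⟨h1, h2⟩
          exact ⟨fun h => h1 ((hbot I).1 h), fun h => h2 ((htop I).1 h)⟩)
    map_rel_iff' := by
      intro I J
      simp only [Equiv.subtypeEquiv, Equiv.trans_apply, Equiv.coe_fn_mk]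
      constructor
      · rintro ⟨h1, h2⟩
        refine ⟨fun h => h1 (by rw [h]), fun h => h2 ((hinf I.1 J.1).1 h)⟩
      · rintro ⟨h1, h2⟩
        refine ⟨fun h => h1 (Subtype.ext (e.injective
            (OrderDual.ofDual.injective (congrArg Subtype.val h)))),
          fun h => h2 ((hinf I.1 J.1).2 h)⟩ }

end GraphIso

end Stmt9Aux

theorem stmt9 (m α : ℕ) (hm : 2 ≤ m) (heven : Even m) (hα : 1 ≤ α)
    (p : Fin m → ℕ) (hp : ∀ i, (p i).Prime) (hinj : Function.Injective p)
    (n : ℕ) (hn : n = ∏ i, p i ^ α) :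
    (interGraph (ZMod n)).cliqueNum =
      (∑ i ∈ Finset.range (m / 2), m.choose i * α ^ (m - i)) +
        m.choose (m / 2) * α ^ (m / 2) / 2 - 1 ∧
    (interGraph (ZMod n)).chromaticNumber =
      (((∑ i ∈ Finset.range (m / 2), m.choose i * α ^ (m - i)) +
        m.choose (m / 2) * α ^ (m / 2) / 2 - 1 : ℕ) : ℕ∞) := by
  constructor
  · rw [Stmt9Aux.cliqueNum_eq_of_iso (Stmt9Aux.graphIso p hp hinj n hn)]
    exact Stmt9Aux.tuple_cliqueNum hm heven hα
  · rw [Stmt9Aux.chromaticNumber_eq_of_iso (Stmt9Aux.graphIso p hp hinj n hn)]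
    exact Stmt9Aux.tuple_chromaticNumber hm heven hα
end

section
/- In the intersection graph G of ideals of F_1 × ⋯ × F_m (m ≥ 3 fields), each ideal I_j with exactly one zero component (in position j) has degree 2^m − 4, and this is the maximum degree of G; moreover these m ideals are precisely the vertices of maximum degree. -/
lemma vdeg_eq (m : ℕ) (v : {S : Finset (Fin m) // S ≠ ∅ ∧ S ≠ Finset.univ}) :
    vdeg (subsetGraph m) v = 2 ^ m - 2 ^ (m - v.1.card) - 2 := by
  classical
  obtain ⟨S, hS1, hS2⟩ := v
  have he : {w // (subsetGraph m).Adj ⟨S, hS1, hS2⟩ w} ≃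
      {T : Finset (Fin m) // (S ∩ T).Nonempty ∧ T ≠ S ∧ T ≠ Finset.univ} :=
    { toFun := fun w => ⟨w.1.1, w.2.2, fun h => w.2.1 (Subtype.ext h.symm), w.1.2.2⟩
      invFun := fun T => ⟨⟨T.1, by
          rw [← Finset.nonempty_iff_ne_empty]
          exact T.2.1.mono Finset.inter_subset_right, T.2.2.2⟩,
        fun h => T.2.2.1 (congrArg Subtype.val h).symm, T.2.1⟩
      left_inv := fun w => rfl
      right_inv := fun T => rfl }
  rw [vdeg, Nat.card_congr he, Nat.card_eq_fintype_card, Fintype.card_subtype]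
  have hA : (Finset.univ.filter fun T : Finset (Fin m) => (S ∩ T).Nonempty).card
      = 2 ^ m - 2 ^ (m - S.card) := by
    have h1 : (Finset.univ.filter fun T : Finset (Fin m) => ¬(S ∩ T).Nonempty)
        = Sᶜ.powerset := by
      ext T
      simp [Finset.not_nonempty_iff_eq_empty, ← Finset.disjoint_iff_inter_eq_empty,
        Finset.subset_compl_comm, Finset.disjoint_left, Finset.subset_iff]
      tauto
    have h2 := Finset.card_filter_add_card_filter_not
      (s := (Finset.univ : Finset (Finset (Fin m))))
      (p := fun T : Finset (Fin m) => (S ∩ T).Nonempty)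
    rw [h1] at h2
    have h3 : (Finset.univ : Finset (Finset (Fin m))).card = 2 ^ m := by
      simp
    have h4 : Sᶜ.card = m - S.card := by
      simp [Finset.card_compl]
    rw [Finset.card_powerset, h3, h4] at h2
    omega
  have hsub : ({S, Finset.univ} : Finset (Finset (Fin m))) ⊆
      (Finset.univ.filter fun T : Finset (Fin m) => (S ∩ T).Nonempty) := by
    intro T hT
    simp only [Finset.mem_insert, Finset.mem_singleton] at hT
    rcases hT with rfl | rfl <;>
      simp [Finset.nonempty_iff_ne_empty, hS1]
  have heq : (Finset.univ.filter fun T : Finset (Fin m) =>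
      (S ∩ T).Nonempty ∧ T ≠ S ∧ T ≠ Finset.univ)
      = (Finset.univ.filter fun T : Finset (Fin m) => (S ∩ T).Nonempty) \
        {S, Finset.univ} := by
    ext T
    simp only [Finset.mem_filter, Finset.mem_sdiff, Finset.mem_insert,
      Finset.mem_singleton, Finset.mem_univ, true_and]
    tauto
  rw [heq, Finset.card_sdiff_of_subset hsub, hA]
  have : ({S, Finset.univ} : Finset (Finset (Fin m))).card = 2 := by
    rw [Finset.card_insert_of_notMem (by simpa using hS2), Finset.card_singleton]
  rw [this]

lemma pow_facts (m k : ℕ) (hm : 3 ≤ m) (hk1 : 1 ≤ k) (hk2 : k ≤ m - 1) :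
    (2 ^ m - 2 ^ (m - k) - 2 = 2 ^ m - 4 ↔ k = m - 1) ∧
    2 ^ m - 2 ^ (m - k) - 2 ≤ 2 ^ m - 4 := by
  have hb : 2 ^ (m - k) ≤ 2 ^ (m - 1) := Nat.pow_le_pow_right (by norm_num) (by omega)
  have ha : 2 ≤ 2 ^ (m - k) := by
    calc 2 = 2 ^ 1 := by norm_num
    _ ≤ 2 ^ (m - k) := Nat.pow_le_pow_right (by norm_num) (by omega)
  have hmm : 2 ^ m = 2 * 2 ^ (m - 1) := by
    rw [← pow_succ']
    congr 1
    omega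
  have h4 : 4 ≤ 2 ^ (m - 1) := by
    calc (4:ℕ) = 2 ^ 2 := by norm_num
    _ ≤ 2 ^ (m - 1) := Nat.pow_le_pow_right (by norm_num) (by omega)
  constructor
  · constructor
    · intro h
      have h2 : 2 ^ (m - k) = 2 := by omega
      have : m - k = 1 := by
        have := Nat.pow_right_injective (le_refl 2) (h2.trans (pow_one 2).symm)
        exact this
      omega
    · intro h
      subst h
      have : m - (m - 1) = 1 := by omega
      rw [this]
      omega
  · omega

lemma card_eq_iff (m : ℕ) (S : Finset (Fin m)) (hS2 : S ≠ Finset.univ) :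
    S.card = m - 1 ↔ ∃ j : Fin m, S = Finset.univ \ {j} := by
  constructor
  · intro h
    have hc : Sᶜ.card = 1 := by
      rw [Finset.card_compl, Fintype.card_fin, h]
      have : S.card < m := by
        have := Finset.card_lt_card (lt_of_le_of_ne (Finset.subset_univ S)
          (by simpa using hS2))
        simpa using this
      omega
    obtain ⟨j, hj⟩ := Finset.card_eq_one.mp hc
    exact ⟨j, by rw [← compl_compl S, hj, Finset.compl_eq_univ_sdiff]⟩
  · rintro ⟨j, rfl⟩
    rw [Finset.card_sdiff_of_subset (by simp), Finset.card_univ, Fintype.card_fin,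
      Finset.card_singleton]

theorem stmt11 (m : ℕ) (hm : 3 ≤ m) :
    (∀ j : Fin m, ∃ v : {S : Finset (Fin m) // S ≠ ∅ ∧ S ≠ Finset.univ},
      v.1 = Finset.univ \ {j} ∧ vdeg (subsetGraph m) v = 2 ^ m - 4) ∧
    maxDeg (subsetGraph m) = 2 ^ m - 4 ∧
    (∀ v : {S : Finset (Fin m) // S ≠ ∅ ∧ S ≠ Finset.univ},
      vdeg (subsetGraph m) v = 2 ^ m - 4 ↔ ∃ j : Fin m, v.1 = Finset.univ \ {j}) := by
  have hcard : ∀ v : {S : Finset (Fin m) // S ≠ ∅ ∧ S ≠ Finset.univ},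
      1 ≤ v.1.card ∧ v.1.card ≤ m - 1 := by
    intro v
    constructor
    · exact Finset.Nonempty.card_pos (Finset.nonempty_iff_ne_empty.mpr v.2.1)
    · have : v.1.card < m := by
        have := Finset.card_lt_card (lt_of_le_of_ne (Finset.subset_univ v.1)
          (by simpa using v.2.2))
        simpa using this
      omega
  have hiff : ∀ v : {S : Finset (Fin m) // S ≠ ∅ ∧ S ≠ Finset.univ},
      vdeg (subsetGraph m) v = 2 ^ m - 4 ↔ ∃ j : Fin m, v.1 = Finset.univ \ {j} := by
    intro v
    obtain ⟨h1, h2⟩ := hcard v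
    rw [vdeg_eq, (pow_facts m v.1.card hm h1 h2).1, card_eq_iff m v.1 v.2.2]
  have hle : ∀ v : {S : Finset (Fin m) // S ≠ ∅ ∧ S ≠ Finset.univ},
      vdeg (subsetGraph m) v ≤ 2 ^ m - 4 := by
    intro v
    obtain ⟨h1, h2⟩ := hcard v
    rw [vdeg_eq]
    exact (pow_facts m v.1.card hm h1 h2).2
  have hex : ∀ j : Fin m, ∃ v : {S : Finset (Fin m) // S ≠ ∅ ∧ S ≠ Finset.univ},
      v.1 = Finset.univ \ {j} ∧ vdeg (subsetGraph m) v = 2 ^ m - 4 := by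
    intro j
    have hne : (Finset.univ \ {j} : Finset (Fin m)) ≠ ∅ := by
      rw [← Finset.nonempty_iff_ne_empty, ← Finset.card_pos,
        Finset.card_sdiff_of_subset (by simp), Finset.card_univ, Fintype.card_fin,
        Finset.card_singleton]
      omega
    have hnu : (Finset.univ \ {j} : Finset (Fin m)) ≠ Finset.univ := by
      intro h
      have : j ∈ (Finset.univ \ {j} : Finset (Fin m)) := by
        rw [h]; exact Finset.mem_univ j
      simp at this
    refine ⟨⟨_, hne, hnu⟩, rfl, ?_⟩
    rw [hiff]
    exact ⟨j, rfl⟩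
  refine ⟨hex, ?_, hiff⟩
  have hj0 : Fin m := ⟨0, by omega⟩
  obtain ⟨v0, -, hv0⟩ := hex hj0
  haveI : Nonempty {S : Finset (Fin m) // S ≠ ∅ ∧ S ≠ Finset.univ} := ⟨v0⟩
  apply le_antisymm
  · exact ciSup_le hle
  · rw [← hv0]
    exact le_ciSup ⟨2 ^ m - 4, by rintro x ⟨v, rfl⟩; exact hle v⟩ v0
end
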